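/- arXiv:2010.14312 — 4 statements merged into one kernel-verified Lean document; each statement's English description precedes it below -/
import Mathlib

section
/- The chromatic symmetric function of S, the twin graph of the 4-cycle, satisfies X_S = 4 e_{(3,2)} + 6 e_{(4,1)} + 50 e_{(5)}. -/
open scoped BigOperators

/-- The chromatic symmetric function `X_G` of a finite simple graph `G`, as a formal
power series in countably many commuting variables `x_0, x_1, x_2, …` (the colors are
the natural numbers): the coefficient of the monomial `∏ i, x_i ^ (d i)` is the number
of proper colorings `κ : V → ℕ` whose color fibers have the sizes prescribed by `d`. -/
noncomputable def csf {V : Type} [Fintype V] (G : SimpleGraph V) : MvPowerSeries ℕ ℚ :=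
  fun d => (Nat.card {κ : V → ℕ // (∀ a b : V, G.Adj a b → κ a ≠ κ b) ∧
      ∀ i : ℕ, Nat.card {v : V // κ v = i} = d i} : ℚ)

/- The elementary symmetric function `e_k`, as a formal power series:
the sum of all squarefree monomials of total degree `k`. -/
open Classical in
noncomputable def esym (k : ℕ) : MvPowerSeries ℕ ℚ :=
  fun d => if (∀ i, d i ≤ 1) ∧ (d.sum fun _ e => e) = k then 1 else 0

/-- The cycle `C_n` on the `n` vertices `0, 1, …, n-1`, with edges `{i, i+1 mod n}`
(for `n = 2` this is the single edge `K_2`). -/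
def cycle (n : ℕ) : SimpleGraph (Fin n) :=
  SimpleGraph.fromRel (fun i j => ((i : ℕ) + 1) % n = (j : ℕ))

/-- The twin graph `G_v`: a new vertex `v'` (here `none`) is added to `G`, adjacent
to `v` and to exactly the neighbors of `v`. -/
def twin {V : Type} (G : SimpleGraph V) (v : V) : SimpleGraph (Option V) :=
  SimpleGraph.fromRel (fun a b =>
    match a, b with
    | some a', some b' => G.Adj a' b'
    | some a', none => a' = v ∨ G.Adj a' v
    | none, some b' => b' = v ∨ G.Adj b' v
    | none, none => False)

/-! ### Auxiliary material -/

section Aux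

/-- Explicit boolean adjacency table for `twin (cycle 4) 3`. -/
def adjB : Option (Fin 4) → Option (Fin 4) → Bool
  | some a, some b => decide (a ≠ b) && (decide (((a:ℕ)+1)%4 = (b:ℕ)) || decide (((b:ℕ)+1)%4 = (a:ℕ)))
  | some a, none => decide (a = 3 ∨ a = 0 ∨ a = 2)
  | none, some b => decide (b = 3 ∨ b = 0 ∨ b = 2)
  | none, none => false

lemma adj_iff (a b : Option (Fin 4)) : (twin (cycle 4) 3).Adj a b ↔ adjB a b := by
  rcases a with _ | a <;> rcases b with _ | b <;>
    simp only [twin, cycle, SimpleGraph.fromRel_adj, adjB] <;>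
    first
      | decide
      | (fin_cases a <;> decide)
      | (fin_cases b <;> decide)
      | (fin_cases a <;> fin_cases b <;> decide)

instance : DecidableRel (twin (cycle 4) 3).Adj :=
  fun a b => decidable_of_iff (adjB a b = true) (adj_iff a b).symm

/-- The independence number of `S` is `2`: any three distinct vertices contain an edge. -/
lemma no_indep_three : ∀ u v w : Option (Fin 4), u ≠ v → u ≠ w → v ≠ w →
    ((twin (cycle 4) 3).Adj u v ∨ (twin (cycle 4) 3).Adj u w ∨ (twin (cycle 4) 3).Adj v w) := by
  decide

/-- `csf` is invariant under permutations of the colors. -/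
lemma csf_perm {V : Type} [Fintype V] (G : SimpleGraph V) (σ : Equiv.Perm ℕ) (d : ℕ →₀ ℕ) :
    csf G (Finsupp.equivMapDomain σ d) = csf G d := by
  unfold csf
  congr 1
  apply Nat.card_congr
  refine ⟨fun x => ⟨σ.symm ∘ x.1, ?_, ?_⟩, fun x => ⟨σ ∘ x.1, ?_, ?_⟩, ?_, ?_⟩
  · intro a b hab
    exact fun h => x.2.1 a b hab (σ.symm.injective h)
  · intro i
    have := x.2.2 (σ i)
    rw [Finsupp.equivMapDomain_apply, Equiv.symm_apply_apply] at this
    rw [← this]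
    apply Nat.card_congr
    exact Equiv.subtypeEquivRight (fun v => by simp [Equiv.symm_apply_eq])
  · intro a b hab
    exact fun h => x.2.1 a b hab (σ.injective h)
  · intro i
    have := x.2.2 (σ.symm i)
    rw [Finsupp.equivMapDomain_apply, ← this]
    apply Nat.card_congr
    exact Equiv.subtypeEquivRight (fun v => by simp [Equiv.apply_eq_iff_eq_symm_apply])
  · intro x; ext v; simp
  · intro x; ext v; simp

/-- A bijection between two finite sets of naturals extends to a permutation of `ℕ`. -/
lemma exists_perm_extend (A B : Finset ℕ) (e : {x // x ∈ A} ≃ {x // x ∈ B}) :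
    ∃ σ : Equiv.Perm ℕ, (∀ (x : ℕ) (h : x ∈ A), σ x = (e ⟨x, h⟩ : ℕ)) ∧
      (∀ x : ℕ, x ∉ A → σ x ∉ B) := by
  haveI iA : Infinite ((↑A : Set ℕ)ᶜ : Set ℕ) :=
    ((Set.infinite_coe_iff (s := (↑A : Set ℕ)ᶜ)).2 A.finite_toSet.infinite_compl)
  haveI iB : Infinite ((↑B : Set ℕ)ᶜ : Set ℕ) :=
    ((Set.infinite_coe_iff (s := (↑B : Set ℕ)ᶜ)).2 B.finite_toSet.infinite_compl)
  haveI dA : Denumerable {x // x ∉ A} := Nat.Subtype.denumerable ((↑A : Set ℕ)ᶜ)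
  haveI dB : Denumerable {x // x ∉ B} := Nat.Subtype.denumerable ((↑B : Set ℕ)ᶜ)
  let e' : {x // x ∉ A} ≃ {x // x ∉ B} := (Denumerable.eqv _).trans (Denumerable.eqv _).symm
  refine ⟨Equiv.subtypeCongr e e', ?_, ?_⟩
  · intro x h
    simp [Equiv.subtypeCongr, Equiv.sumCompl_symm_apply_of_pos h]
  · intro x h
    simpa [Equiv.subtypeCongr, Equiv.sumCompl_symm_apply_of_neg h] using (e' ⟨x, h⟩).2

/-- The canonical monomial exponent vector with `n2` twos followed by `n1` ones. -/
def canon (n2 n1 : ℕ) : ℕ →₀ ℕ :=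
  ⟨Finset.range (n2 + n1), fun i => if i < n2 then 2 else if i < n2 + n1 then 1 else 0,
    by intro a; simp only [Finset.mem_range]; split_ifs <;> omega⟩

lemma canon_apply (n2 n1 i : ℕ) :
    canon n2 n1 i = if i < n2 then 2 else if i < n2 + n1 then 1 else 0 := rfl

/-- Any `d` with all values at most `2` is a recoloring of a canonical exponent vector. -/
lemma exists_canon (d : ℕ →₀ ℕ) (h2 : ∀ i, d i ≤ 2) :
    ∃ σ : Equiv.Perm ℕ,
      Finsupp.equivMapDomain σ
        (canon (d.support.filter (fun i => d i = 2)).card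
               (d.support.filter (fun i => d i = 1)).card) = d := by
  classical
  set S2 := d.support.filter (fun i => d i = 2) with hS2
  set S1 := d.support.filter (fun i => d i = 1) with hS1
  set n2 := S2.card
  set n1 := S1.card
  have hd2 : ∀ x ∈ S2, d x = 2 := fun x hx => (Finset.mem_filter.1 hx).2
  have hd1 : ∀ x ∈ S1, d x = 1 := fun x hx => (Finset.mem_filter.1 hx).2
  have hdisj : ∀ x, x ∈ S1 → x ∉ S2 := by
    intro x h1 h2'
    have := hd1 x h1; have := hd2 x h2'; omega
  let e0 : {x // x ∈ Finset.range (n2 + n1)} ≃ Fin (n2 + n1) :=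
    ⟨fun x => ⟨x.1, Finset.mem_range.1 x.2⟩, fun i => ⟨i.1, Finset.mem_range.2 i.2⟩,
      fun _ => rfl, fun _ => rfl⟩
  let e2 : Fin n2 ⊕ Fin n1 ≃ {x // x ∈ S2} ⊕ {x // x ∈ S1} :=
    Equiv.sumCongr S2.equivFin.symm S1.equivFin.symm
  let e3 : {x // x ∈ S2} ⊕ {x // x ∈ S1} ≃ {x // x ∈ S2 ∪ S1} :=
    ⟨Sum.elim (fun x => ⟨x.1, Finset.mem_union_left _ x.2⟩)
        (fun x => ⟨x.1, Finset.mem_union_right _ x.2⟩),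
      fun x => if h : x.1 ∈ S2 then .inl ⟨x.1, h⟩
        else .inr ⟨x.1, (Finset.mem_union.1 x.2).resolve_left h⟩,
      by rintro (⟨x, h⟩ | ⟨x, h⟩)
         · simp [h]
         · simp [hdisj x h],
      by rintro ⟨x, h⟩; by_cases hx : x ∈ S2 <;> simp [hx]⟩
  let e : {x // x ∈ Finset.range (n2 + n1)} ≃ {x // x ∈ S2 ∪ S1} :=
    (e0.trans finSumFinEquiv.symm).trans (e2.trans e3)
  have he : ∀ (x : ℕ) (h : x ∈ Finset.range (n2 + n1)),
      (x < n2 → (e ⟨x, h⟩ : ℕ) ∈ S2) ∧ (n2 ≤ x → (e ⟨x, h⟩ : ℕ) ∈ S1) := by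
    intro x h
    constructor
    · intro hx
      have : e0 ⟨x, h⟩ = Fin.castAdd n1 ⟨x, hx⟩ := by ext; rfl
      simp only [e, Equiv.trans_apply, this, finSumFinEquiv_symm_apply_castAdd]
      exact (S2.equivFin.symm _).2
    · intro hx
      have hx2 : x - n2 < n1 := by have := Finset.mem_range.1 h; omega
      have : e0 ⟨x, h⟩ = Fin.natAdd n2 ⟨x - n2, hx2⟩ := by
        ext; show x = n2 + (x - n2); omega
      simp only [e, Equiv.trans_apply, this, finSumFinEquiv_symm_apply_natAdd]
      exact (S1.equivFin.symm _).2
  obtain ⟨σ, hσ1, hσ2⟩ := exists_perm_extend (Finset.range (n2 + n1)) (S2 ∪ S1) e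
  have key : ∀ i, d (σ i) = canon n2 n1 i := by
    intro i
    rw [canon_apply]
    by_cases h : i ∈ Finset.range (n2 + n1)
    · rw [hσ1 i h]
      rcases lt_or_ge i n2 with hi | hi
      · rw [if_pos hi]; exact hd2 _ ((he i h).1 hi)
      · rw [if_neg (by omega), if_pos (Finset.mem_range.1 h)]
        exact hd1 _ ((he i h).2 hi)
    · have hk := Finset.mem_range.not.1 h
      rw [if_neg (by omega), if_neg (by omega)]
      by_contra hne
      have := h2 (σ i)
      have : σ i ∈ S2 ∪ S1 := by
        rcases Nat.lt_or_ge (d (σ i)) 2 with hlt | hge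
        · exact Finset.mem_union_right _ (Finset.mem_filter.2
            ⟨Finsupp.mem_support_iff.2 hne, by omega⟩)
        · exact Finset.mem_union_left _ (Finset.mem_filter.2
            ⟨Finsupp.mem_support_iff.2 hne, by omega⟩)
      exact hσ2 i h this
  refine ⟨σ, ?_⟩
  ext j
  rw [Finsupp.equivMapDomain_apply, ← key (σ.symm j), Equiv.apply_symm_apply]

lemma natCard_subtype {V : Type} [Fintype V] (p : V → Prop) [DecidablePred p] :
    Nat.card {v // p v} = (Finset.univ.filter p).card := by
  rw [Nat.card_eq_fintype_card, Fintype.card_subtype]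

lemma lt_of_fiber {V : Type} [Fintype V] (c : ℕ →₀ ℕ) (k : ℕ)
    (hsupp : ∀ i, k ≤ i → c i = 0) (κ : V → ℕ)
    (hκ : ∀ i : ℕ, Nat.card {v : V // κ v = i} = c i) (v : V) : κ v < k := by
  by_contra hge
  have h0 : c (κ v) = 0 := hsupp _ (le_of_not_gt hge)
  have := hκ (κ v)
  rw [h0] at this
  haveI : Nonempty {w : V // κ w = κ v} := ⟨⟨v, rfl⟩⟩
  have hpos : 0 < Nat.card {w : V // κ w = κ v} := Nat.card_pos
  omega

/-- Colorings with colors supported in `{0, …, k-1}` are counted by `Fin k`-colorings. -/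
lemma card_colorings {V : Type} [Fintype V] [DecidableEq V] (G : SimpleGraph V)
    (c : ℕ →₀ ℕ) (k : ℕ) (hsupp : ∀ i, k ≤ i → c i = 0) :
    Nat.card {κ : V → ℕ // (∀ a b : V, G.Adj a b → κ a ≠ κ b) ∧
        ∀ i : ℕ, Nat.card {v : V // κ v = i} = c i}
      = Nat.card {κ : V → Fin k // (∀ a b : V, G.Adj a b → κ a ≠ κ b) ∧
        ∀ j : Fin k, (Finset.univ.filter (fun v => κ v = j)).card = c j} := by
  classical
  apply Nat.card_congr
  refine ⟨fun x => ⟨fun v => ⟨x.1 v, lt_of_fiber c k hsupp x.1 x.2.2 v⟩, ?_, ?_⟩,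
    fun y => ⟨fun v => (y.1 v : ℕ), ?_, ?_⟩, ?_, ?_⟩
  · intro a b hab h
    exact x.2.1 a b hab (congrArg Fin.val h)
  · intro j
    have : ∀ v : V, ((⟨x.1 v, lt_of_fiber c k hsupp x.1 x.2.2 v⟩ : Fin k) = j)
        ↔ x.1 v = (j : ℕ) := fun v => Fin.ext_iff
    rw [Finset.filter_congr (fun v _ => by rw [this v])]
    rw [← natCard_subtype (fun v => x.1 v = (j : ℕ))]
    exact x.2.2 (j : ℕ)
  · intro a b hab h
    exact y.2.1 a b hab (Fin.val_injective h)
  · intro i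
    by_cases hik : i < k
    · have : ∀ v : V, ((y.1 v : ℕ) = i) ↔ y.1 v = ⟨i, hik⟩ := by
        intro v; rw [Fin.ext_iff]
      rw [natCard_subtype (fun v => (y.1 v : ℕ) = i)]
      rw [Finset.filter_congr (fun v _ => by rw [this v])]
      exact y.2.2 ⟨i, hik⟩
    · rw [hsupp i (le_of_not_gt hik)]
      rw [natCard_subtype (fun v => (y.1 v : ℕ) = i), Finset.card_eq_zero,
        Finset.filter_eq_empty_iff]
      intro v _
      exact fun h => hik (h ▸ (y.1 v).2)
  · intro x; apply Subtype.ext; funext v; rfl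
  · intro y; apply Subtype.ext; funext v; apply Fin.ext; rfl

/-- The fiber sizes of any coloring sum to the number of vertices. -/
lemma sum_of_colors {V : Type} [Fintype V] [DecidableEq V]
    (d : ℕ →₀ ℕ) (κ : V → ℕ) (hκ : ∀ i : ℕ, Nat.card {v : V // κ v = i} = d i) :
    (d.sum fun _ e => e) = Fintype.card V := by
  classical
  have hfib : ∀ i, (Finset.univ.filter (fun v => κ v = i)).card = d i := fun i => by
    rw [← natCard_subtype]; exact hκ i
  have hmem : ∀ v, κ v ∈ d.support := by
    intro v
    rw [Finsupp.mem_support_iff]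
    intro h0
    have := hfib (κ v)
    rw [h0, Finset.card_eq_zero, Finset.filter_eq_empty_iff] at this
    exact this (Finset.mem_univ v) rfl
  rw [Finsupp.sum, ← Finset.card_univ,
    Finset.card_eq_sum_card_fiberwise (fun v _ => hmem v)]
  exact Finset.sum_congr rfl fun i _ => (hfib i).symm

lemma csf_zero_of_sum {V : Type} [Fintype V] [DecidableEq V] (G : SimpleGraph V)
    (d : ℕ →₀ ℕ) (h : (d.sum fun _ e => e) ≠ Fintype.card V) : csf G d = 0 := by
  unfold csf
  haveI : IsEmpty {κ : V → ℕ // (∀ a b : V, G.Adj a b → κ a ≠ κ b) ∧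
      ∀ i : ℕ, Nat.card {v : V // κ v = i} = d i} :=
    ⟨fun x => h (sum_of_colors d x.1 x.2.2)⟩
  rw [Nat.card_of_isEmpty]
  norm_num

lemma csf_zero_of_big (d : ℕ →₀ ℕ) (i : ℕ) (h3 : 3 ≤ d i) :
    csf (twin (cycle 4) 3) d = 0 := by
  unfold csf
  haveI : IsEmpty {κ : Option (Fin 4) → ℕ //
      (∀ a b, (twin (cycle 4) 3).Adj a b → κ a ≠ κ b) ∧
      ∀ i : ℕ, Nat.card {v // κ v = i} = d i} := by
    refine ⟨fun x => ?_⟩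
    obtain ⟨κ, hprop, hfib⟩ := x
    have hcard : 2 < (Finset.univ.filter (fun v => κ v = i)).card := by
      rw [← natCard_subtype (fun v => κ v = i)]
      rw [hfib i]; omega
    obtain ⟨u, v, w, hu, hv, hw, huv, huw, hvw⟩ := Finset.two_lt_card_iff.1 hcard
    rw [Finset.mem_filter] at hu hv hw
    rcases no_indep_three u v w huv huw hvw with h | h | h
    · exact hprop u v h (by rw [hu.2, hv.2])
    · exact hprop u w h (by rw [hu.2, hw.2])
    · exact hprop v w h (by rw [hv.2, hw.2])
  rw [Nat.card_of_isEmpty]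
  norm_num

-- The set of decompositions counted by the coefficient of `e_a * e_b` at `d`.
open Classical in
noncomputable def Eset (a b : ℕ) (d : ℕ →₀ ℕ) : Finset ((ℕ →₀ ℕ) × (ℕ →₀ ℕ)) :=
  (Finset.HasAntidiagonal.antidiagonal d).filter (fun p => (∀ i, p.1 i ≤ 1) ∧ (p.1.sum fun _ e => e) = a ∧
    (∀ i, p.2 i ≤ 1) ∧ (p.2.sum fun _ e => e) = b)

lemma coeff_esym_mul (a b : ℕ) (d : ℕ →₀ ℕ) :
    (esym a * esym b) d = ((Eset a b d).card : ℚ) := by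
  classical
  show MvPowerSeries.coeff d (esym a * esym b) = _
  rw [MvPowerSeries.coeff_mul, Eset, ← Finset.sum_boole]
  apply Finset.sum_congr rfl
  intro p _
  show esym a p.1 * esym b p.2 = _
  simp only [esym]
  split_ifs <;> simp_all

lemma sum_sq (p : ℕ →₀ ℕ) (h1 : ∀ i, p i ≤ 1) : (p.sum fun _ e => e) = p.support.card := by
  rw [Finsupp.sum, Finset.card_eq_sum_ones]
  apply Finset.sum_congr rfl
  intro i hi
  have := h1 i
  have := Finsupp.mem_support_iff.1 hi
  omega

lemma Eset_empty_of_sum (a b : ℕ) (d : ℕ →₀ ℕ) (h : (d.sum fun _ e => e) ≠ a + b) :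
    Eset a b d = ∅ := by
  classical
  rw [Eset, Finset.filter_eq_empty_iff]
  rintro p hp ⟨_, hsa, _, hsb⟩
  rw [Finset.HasAntidiagonal.mem_antidiagonal] at hp
  apply h
  rw [← hp, Finsupp.sum_add_index' (fun _ => rfl) (fun _ _ _ => rfl), hsa, hsb]

lemma Eset_empty_of_big (a b : ℕ) (d : ℕ →₀ ℕ) (i : ℕ) (h : 3 ≤ d i) :
    Eset a b d = ∅ := by
  classical
  rw [Eset, Finset.filter_eq_empty_iff]
  rintro p hp ⟨h1, _, h2, _⟩
  rw [Finset.HasAntidiagonal.mem_antidiagonal] at hp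
  have := h1 i; have := h2 i
  have : p.1 i + p.2 i = d i := by rw [← Finsupp.add_apply, hp]
  omega

lemma Eset_empty_of_n2 (a b : ℕ) (d : ℕ →₀ ℕ)
    (h : b < (d.support.filter (fun i => d i = 2)).card) :
    Eset a b d = ∅ := by
  classical
  rw [Eset, Finset.filter_eq_empty_iff]
  rintro p hp ⟨h1, _, h2, hsb⟩
  rw [Finset.HasAntidiagonal.mem_antidiagonal] at hp
  have hsub : d.support.filter (fun i => d i = 2) ⊆ p.2.support := by
    intro i hi
    have hd2 : d i = 2 := (Finset.mem_filter.1 hi).2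
    have : p.1 i + p.2 i = d i := by rw [← Finsupp.add_apply, hp]
    have := h1 i
    exact Finsupp.mem_support_iff.2 (by omega)
  have := Finset.card_le_card hsub
  rw [sum_sq p.2 h2] at hsb
  omega

lemma Eset_card (a b : ℕ) (d : ℕ →₀ ℕ) (h2 : ∀ i, d i ≤ 2)
    (hsum : (d.sum fun _ e => e) = a + b)
    (hn2 : (d.support.filter (fun i => d i = 2)).card ≤ b) :
    (Eset a b d).card = (d.support.filter (fun i => d i = 1)).card.choose
      (b - (d.support.filter (fun i => d i = 2)).card) := by
  classical
  set S2 := d.support.filter (fun i => d i = 2) with hS2def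
  set S1 := d.support.filter (fun i => d i = 1) with hS1def
  have hmemS2 : ∀ i, i ∈ S2 ↔ d i = 2 := by
    intro i; rw [hS2def, Finset.mem_filter, Finsupp.mem_support_iff]; omega
  have hmemS1 : ∀ i, i ∈ S1 ↔ d i = 1 := by
    intro i; rw [hS1def, Finset.mem_filter, Finsupp.mem_support_iff]; omega
  rw [← Finset.card_powersetCard]
  refine Finset.card_bij' (fun p _ => p.2.support \ S2)
    (fun U _ => (d - Finsupp.indicator (U ∪ S2) (fun _ _ => 1),
      Finsupp.indicator (U ∪ S2) (fun _ _ => 1))) ?_ ?_ ?_ ?_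
  · -- forward into powersetCard
    intro p hp
    rw [Eset, Finset.mem_filter, Finset.HasAntidiagonal.mem_antidiagonal] at hp
    obtain ⟨hpd, h1, _, hq1, hqb⟩ := hp
    have hpt : ∀ i, p.1 i + p.2 i = d i := fun i => by rw [← Finsupp.add_apply, hpd]
    have hS2sub : S2 ⊆ p.2.support := by
      intro i hi
      have := (hmemS2 i).1 hi
      have := h1 i; have := hpt i
      exact Finsupp.mem_support_iff.2 (by omega)
    rw [Finset.mem_powersetCard]
    constructor
    · intro i hi
      rw [Finset.mem_sdiff, Finsupp.mem_support_iff] at hi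
      rw [hmemS1]
      have := hpt i; have := h2 i; have hni := (hmemS2 i).not.1 hi.2
      omega
    · rw [Finset.card_sdiff_of_subset hS2sub, ← sum_sq p.2 hq1, hqb]
  · -- backward into Eset
    intro U hU
    rw [Finset.mem_powersetCard] at hU
    obtain ⟨hUS1, hUcard⟩ := hU
    set t := Finsupp.indicator (U ∪ S2) (fun _ _ => (1:ℕ)) with htdef
    have ht : ∀ i, t i = if i ∈ U ∪ S2 then 1 else 0 := by
      intro i; rw [htdef, Finsupp.indicator_apply]; split_ifs <;> rfl
    have htd : ∀ i, t i ≤ d i := by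
      intro i
      rw [ht i]
      split_ifs with h
      · rcases Finset.mem_union.1 h with h | h
        · have := (hmemS1 i).1 (hUS1 h); omega
        · have := (hmemS2 i).1 h; omega
      · omega
    have hdisj : Disjoint U S2 := by
      rw [Finset.disjoint_left]
      intro i hi hi2
      have := (hmemS1 i).1 (hUS1 hi); have := (hmemS2 i).1 hi2; omega
    have htsupp : t.support = U ∪ S2 := by
      ext i
      rw [Finsupp.mem_support_iff, ht i]
      split_ifs with h <;> simp [h]
    have ht1 : ∀ i, t i ≤ 1 := by intro i; rw [ht i]; split_ifs <;> omega
    have htsum : (t.sum fun _ e => e) = b := by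
      rw [sum_sq t ht1, htsupp, Finset.card_union_of_disjoint hdisj, hUcard]
      omega
    have hadd : (d - t) + t = d := by
      ext i
      rw [Finsupp.add_apply, Finsupp.tsub_apply]
      have := htd i; omega
    rw [Eset, Finset.mem_filter, Finset.HasAntidiagonal.mem_antidiagonal]
    refine ⟨hadd, ?_, ?_, ht1, htsum⟩
    · intro i
      rw [Finsupp.tsub_apply]
      have := h2 i; have := htd i; have := ht i
      by_cases hdi : d i = 2
      · have : i ∈ U ∪ S2 := Finset.mem_union_right _ ((hmemS2 i).2 hdi)
        have := ht i; simp only [this, if_pos ‹i ∈ U ∪ S2›]; omega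
      · omega
    · show ((d - t).sum fun _ e => e) = a
      have := congrArg (fun f : ℕ →₀ ℕ => f.sum fun _ e => e) hadd
      rw [Finsupp.sum_add_index' (fun _ => rfl) (fun _ _ _ => rfl)] at this
      rw [htsum, hsum] at this
      omega
  · -- left inverse
    intro p hp
    rw [Eset, Finset.mem_filter, Finset.HasAntidiagonal.mem_antidiagonal] at hp
    obtain ⟨hpd, h1, _, hq1, _⟩ := hp
    have hpt : ∀ i, p.1 i + p.2 i = d i := fun i => by rw [← Finsupp.add_apply, hpd]
    have hS2sub : S2 ⊆ p.2.support := by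
      intro i hi
      have := (hmemS2 i).1 hi
      have := h1 i; have := hpt i
      exact Finsupp.mem_support_iff.2 (by omega)
    have hU : p.2.support \ S2 ∪ S2 = p.2.support := by
      ext i
      simp only [Finset.mem_union, Finset.mem_sdiff]
      constructor
      · rintro (⟨h, _⟩ | h); exact h; exact hS2sub h
      · intro h; by_cases hi : i ∈ S2 <;> tauto
    have ht2 : Finsupp.indicator (p.2.support \ S2 ∪ S2) (fun _ _ => (1:ℕ)) = p.2 := by
      ext i
      rw [Finsupp.indicator_apply]
      split_ifs with h
      · rw [hU] at h
        have := Finsupp.mem_support_iff.1 h; have := hq1 i; omega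
      · rw [hU] at h
        have := Finsupp.notMem_support_iff.1 h; omega
    rw [ht2]
    have hd : d - p.2 = p.1 := by
      ext i
      rw [Finsupp.tsub_apply]
      have := hpt i; omega
    rw [hd]
  · -- right inverse
    intro U hU
    dsimp only
    rw [Finset.mem_powersetCard] at hU
    obtain ⟨hUS1, _⟩ := hU
    have hdisj : ∀ i ∈ U, i ∉ S2 := by
      intro i hi hi2
      have := (hmemS1 i).1 (hUS1 hi); have := (hmemS2 i).1 hi2; omega
    have htsupp : (Finsupp.indicator (U ∪ S2) (fun _ _ => (1:ℕ))).support = U ∪ S2 := by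
      ext i
      rw [Finsupp.mem_support_iff, Finsupp.indicator_apply]
      split_ifs with h <;> simp [h]
    rw [htsupp]
    ext i
    simp only [Finset.mem_sdiff, Finset.mem_union]
    constructor
    · rintro ⟨h | h, h2'⟩; exact h; exact absurd h h2'
    · intro h; exact ⟨Or.inl h, hdisj i h⟩

lemma rhs_apply (f g h : MvPowerSeries ℕ ℚ) (d : ℕ →₀ ℕ) :
    (4 * f + 6 * g + 50 * h) d = 4 * f d + 6 * g d + 50 * h d := by
  show MvPowerSeries.coeff d (4 * f + 6 * g + 50 * h) = _
  rw [map_add, map_add]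
  rw [show (4 : MvPowerSeries ℕ ℚ) = MvPowerSeries.C (σ := ℕ) (R := ℚ) 4 from (map_ofNat _ 4).symm,
    show (6 : MvPowerSeries ℕ ℚ) = MvPowerSeries.C (σ := ℕ) (R := ℚ) 6 from (map_ofNat _ 6).symm,
    show (50 : MvPowerSeries ℕ ℚ) = MvPowerSeries.C (σ := ℕ) (R := ℚ) 50 from (map_ofNat _ 50).symm]
  rw [MvPowerSeries.coeff_C_mul, MvPowerSeries.coeff_C_mul, MvPowerSeries.coeff_C_mul]
  rfl

/-- The supports arithmetic: with all values at most 2, the total degree is `n1 + 2 n2`. -/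
lemma sum_eq_n1_n2 (d : ℕ →₀ ℕ) (h2 : ∀ i, d i ≤ 2) :
    (d.sum fun _ e => e) = (d.support.filter (fun i => d i = 1)).card
      + 2 * (d.support.filter (fun i => d i = 2)).card := by
  classical
  have hsupp : d.support = d.support.filter (fun i => d i = 1)
      ∪ d.support.filter (fun i => d i = 2) := by
    ext i
    simp only [Finset.mem_union, Finset.mem_filter, Finsupp.mem_support_iff]
    have := h2 i; omega
  have hdisj : Disjoint (d.support.filter (fun i => d i = 1))
      (d.support.filter (fun i => d i = 2)) := by
    rw [Finset.disjoint_left]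
    intro i hi hi2
    have := (Finset.mem_filter.1 hi).2; have := (Finset.mem_filter.1 hi2).2; omega
  rw [Finsupp.sum]
  conv_lhs => rw [hsupp]
  rw [Finset.sum_union hdisj]
  rw [Finset.sum_congr rfl (fun i hi => (Finset.mem_filter.1 hi).2),
    Finset.sum_congr rfl (fun i hi => (Finset.mem_filter.1 hi).2)]
  simp [Finset.sum_const, mul_comm]

set_option maxRecDepth 10000 in
lemma count21 : Nat.card {κ : Option (Fin 4) → Fin 3 //
    (∀ a b, (twin (cycle 4) 3).Adj a b → κ a ≠ κ b) ∧
    ∀ j : Fin 3, (Finset.univ.filter (fun v => κ v = j)).card = canon 2 1 ↑j} = 4 := by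
  rw [Nat.card_eq_fintype_card]
  decide

set_option maxRecDepth 100000 in
lemma count13 : Nat.card {κ : Option (Fin 4) → Fin 4 //
    (∀ a b, (twin (cycle 4) 3).Adj a b → κ a ≠ κ b) ∧
    ∀ j : Fin 4, (Finset.univ.filter (fun v => κ v = j)).card = canon 1 3 ↑j} = 18 := by
  rw [Nat.card_eq_fintype_card]
  decide

set_option maxRecDepth 4000000 in
set_option maxHeartbeats 4000000 in
lemma count05 : Nat.card {κ : Option (Fin 4) → Fin 5 //
    (∀ a b, (twin (cycle 4) 3).Adj a b → κ a ≠ κ b) ∧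
    ∀ j : Fin 5, (Finset.univ.filter (fun v => κ v = j)).card = canon 0 5 ↑j} = 120 := by
  rw [Nat.card_eq_fintype_card]
  decide

end Aux

/-- The chromatic symmetric function of `S`, the twin graph of the
`4`-cycle (at the vertex `v_4`, here `3`), satisfies
`X_S = 4 e_{(3,2)} + 6 e_{(4,1)} + 50 e_{(5)}`. -/
theorem csf_twin_cycle_four :
    csf (twin (cycle 4) 3) =
      4 * (esym 3 * esym 2) + 6 * (esym 4 * esym 1) + 50 * esym 5 := by
  classical
  funext d
  rw [show ((4 * (esym 3 * esym 2) + 6 * (esym 4 * esym 1) + 50 * esym 5) d : ℚ)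
      = 4 * (esym 3 * esym 2) d + 6 * (esym 4 * esym 1) d + 50 * esym 5 d
    from rhs_apply _ _ _ d]
  rw [coeff_esym_mul, coeff_esym_mul]
  have hcardV : Fintype.card (Option (Fin 4)) = 5 := by simp
  by_cases hsum : (d.sum fun _ e => e) = 5
  · by_cases h2 : ∀ i, d i ≤ 2
    · -- main case
      set n2 := (d.support.filter (fun i => d i = 2)).card with hn2def
      set n1 := (d.support.filter (fun i => d i = 1)).card with hn1def
      have harith : n1 + 2 * n2 = 5 := by
        rw [hn1def, hn2def]
        have := sum_eq_n1_n2 d h2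
        omega
      obtain ⟨σ, hσ⟩ := exists_canon d h2
      rw [← hn2def, ← hn1def] at hσ
      have hL : csf (twin (cycle 4) 3) d = csf (twin (cycle 4) 3) (canon n2 n1) := by
        rw [← hσ, csf_perm]
      have hn2cases : n2 = 0 ∨ n2 = 1 ∨ n2 = 2 := by omega
      have hesym5 : esym 5 d = if n2 = 0 then 1 else 0 := by
        simp only [esym]
        rcases Nat.eq_zero_or_pos n2 with h0 | hpos
        · rw [if_pos h0, if_pos]
          refine ⟨fun i => ?_, hsum⟩
          by_contra hi
          have : i ∈ d.support.filter (fun i => d i = 2) := by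
            rw [Finset.mem_filter, Finsupp.mem_support_iff]
            have := h2 i; omega
          rw [← hn2def] at *
          have := Finset.card_pos.2 ⟨i, this⟩
          omega
        · have hne : ¬(n2 = 0) := by omega
          rw [if_neg hne, if_neg]
          rintro ⟨hsq, -⟩
          obtain ⟨i, hi⟩ := Finset.card_pos.1 (hn2def ▸ hpos)
          have := (Finset.mem_filter.1 hi).2
          have := hsq i
          omega
      rcases hn2cases with h0 | h1 | h2'
      · -- n2 = 0, n1 = 5
        have hn1 : n1 = 5 := by omega
        rw [h0, hn1] at hL
        rw [hL]
        have : csf (twin (cycle 4) 3) (canon 0 5)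
            = ((Nat.card {κ : Option (Fin 4) → Fin 5 //
              (∀ a b, (twin (cycle 4) 3).Adj a b → κ a ≠ κ b) ∧
              ∀ j : Fin 5, (Finset.univ.filter (fun v => κ v = j)).card = canon 0 5 ↑j} : ℕ) : ℚ) := by
          unfold csf
          rw [card_colorings _ _ 5 (fun i hi => by rw [canon_apply]; split_ifs <;> omega)]
        rw [this, count05]
        rw [Eset_card 3 2 d h2 (by omega) (by omega),
          Eset_card 4 1 d h2 (by omega) (by omega)]
        rw [← hn2def, ← hn1def, h0, hn1, hesym5, if_pos h0]
        norm_num [Nat.choose]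
      · -- n2 = 1, n1 = 3
        have hn1 : n1 = 3 := by omega
        rw [h1, hn1] at hL
        rw [hL]
        have : csf (twin (cycle 4) 3) (canon 1 3)
            = ((Nat.card {κ : Option (Fin 4) → Fin 4 //
              (∀ a b, (twin (cycle 4) 3).Adj a b → κ a ≠ κ b) ∧
              ∀ j : Fin 4, (Finset.univ.filter (fun v => κ v = j)).card = canon 1 3 ↑j} : ℕ) : ℚ) := by
          unfold csf
          rw [card_colorings _ _ 4 (fun i hi => by rw [canon_apply]; split_ifs <;> omega)]
        rw [this, count13]
        rw [Eset_card 3 2 d h2 (by omega) (by omega),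
          Eset_card 4 1 d h2 (by omega) (by omega)]
        rw [← hn2def, ← hn1def, h1, hn1, hesym5, if_neg (by omega)]
        norm_num [Nat.choose]
      · -- n2 = 2, n1 = 1
        have hn1 : n1 = 1 := by omega
        rw [h2', hn1] at hL
        rw [hL]
        have : csf (twin (cycle 4) 3) (canon 2 1)
            = ((Nat.card {κ : Option (Fin 4) → Fin 3 //
              (∀ a b, (twin (cycle 4) 3).Adj a b → κ a ≠ κ b) ∧
              ∀ j : Fin 3, (Finset.univ.filter (fun v => κ v = j)).card = canon 2 1 ↑j} : ℕ) : ℚ) := by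
          unfold csf
          rw [card_colorings _ _ 3 (fun i hi => by rw [canon_apply]; split_ifs <;> omega)]
        rw [this, count21]
        rw [Eset_card 3 2 d h2 (by omega) (by omega)]
        rw [Eset_empty_of_n2 4 1 d (by omega)]
        rw [← hn2def, ← hn1def, h2', hn1, hesym5, if_neg (by omega)]
        norm_num [Nat.choose]
    · -- some value ≥ 3
      push_neg at h2
      obtain ⟨i, hi⟩ := h2
      have hi3 : 3 ≤ d i := hi
      rw [csf_zero_of_big d i hi3]
      rw [Eset_empty_of_big 3 2 d i hi3, Eset_empty_of_big 4 1 d i hi3]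
      have : esym 5 d = 0 := by
        simp only [esym]
        rw [if_neg]
        rintro ⟨hsq, -⟩
        have := hsq i; omega
      rw [this]
      norm_num
  · -- total degree wrong
    rw [csf_zero_of_sum _ d (by rw [hcardV]; exact hsum)]
    rw [Eset_empty_of_sum 3 2 d (by omega), Eset_empty_of_sum 4 1 d (by omega)]
    have : esym 5 d = 0 := by
      simp only [esym]
      rw [if_neg]
      rintro ⟨-, h⟩
      exact hsum h
    rw [this]
    norm_num
end

section
/- For every integer b ≥ 1, deleting the edge v_3v_4 from H_b gives X_{H_b − {v_3v_4}} = 2 X_{T^{4,b+1}} − X_{P_{b+1}} · X_{C_4}. -/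
open scoped BigOperators

/-- The path `P_n` on the `n` vertices `0, 1, …, n-1`, with edges `{i, i+1}`. -/
def path (n : ℕ) : SimpleGraph (Fin n) :=
  SimpleGraph.fromRel (fun i j => (i : ℕ) + 1 = (j : ℕ))

/-- The tadpole graph `T^{a,b}` on `a + b` vertices: the cycle `C_a` on the vertices
`0, …, a-1` (consecutive vertices adjacent, together with the closing edge `{0, a-1}`)
and the path `P_b` on the vertices `a, …, a+b-1`, joined by the edge `{a-1, a}`.
Here vertex `i - 1` plays the role of the vertex `v_i` of the paper. -/
def tadpole (a b : ℕ) : SimpleGraph (Fin (a + b)) :=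
  SimpleGraph.fromRel (fun i j => (i : ℕ) + 1 = (j : ℕ) ∨ ((i : ℕ) = 0 ∧ (j : ℕ) = a - 1))

/-- The graph `H_b`: the twin graph `T^{4,b}_{v_4}` (where `v_4` is the cycle vertex
of degree 3, here vertex `3`, and the twin vertex `v_4'` is `none`) with the edge
`v_4' v_5` deleted. Its edges are `v_1v_2, v_2v_3, v_3v_4, v_3v_4', v_4v_1, v_4'v_1,
v_4v_4', v_4v_5` and `v_iv_{i+1}` for `5 ≤ i ≤ b+3`. -/
def Hgraph (b : ℕ) (hb : 1 ≤ b) : SimpleGraph (Option (Fin (4 + b))) :=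
  (twin (tadpole 4 b) ⟨3, by omega⟩).deleteEdges {s(none, some ⟨4, by omega⟩)}

namespace CsfAux


def proper {V : Type} (G : SimpleGraph V) (κ : V → ℕ) : Prop :=
  ∀ a b : V, G.Adj a b → κ a ≠ κ b

noncomputable def fc {V : Type} [Fintype V] (κ : V → ℕ) : ℕ →₀ ℕ :=
  ∑ v, Finsupp.single (κ v) 1

variable {V : Type} [Fintype V]

lemma fc_apply (κ : V → ℕ) (i : ℕ) : fc κ i = Nat.card {v // κ v = i} := by
  classical
  rw [fc, Finsupp.finset_sum_apply]
  rw [Nat.card_eq_fintype_card, Fintype.card_subtype]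
  simp [Finsupp.single_apply]

lemma csf_coeff (G : SimpleGraph V) (d : ℕ →₀ ℕ) :
    csf G d = (Nat.card {κ : V → ℕ // proper G κ ∧ fc κ = d} : ℚ) := by
  unfold csf
  apply congrArg
  apply Nat.card_congr
  apply Equiv.subtypeEquivRight
  intro κ
  constructor
  · rintro ⟨h1, h2⟩
    exact ⟨h1, Finsupp.ext fun i => by rw [fc_apply, h2]⟩
  · rintro ⟨h1, h2⟩
    exact ⟨h1, fun i => by rw [← fc_apply, h2]⟩

lemma fc_pos (κ : V → ℕ) (v : V) : fc κ (κ v) ≠ 0 := by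
  classical
  rw [fc_apply]
  have : Nonempty {w // κ w = κ v} := ⟨⟨v, rfl⟩⟩
  rw [Nat.card_eq_fintype_card]
  exact Fintype.card_ne_zero

lemma finite_col (P : (V → ℕ) → Prop) (d : ℕ →₀ ℕ) :
    Finite {κ : V → ℕ // P κ ∧ fc κ = d} := by
  classical
  apply Finite.of_injective (fun κ : {κ : V → ℕ // P κ ∧ fc κ = d} =>
    (fun v => (⟨κ.1 v, by
      have h := κ.2.2
      have h2 := fc_pos κ.1 v
      rw [h] at h2
      exact Finsupp.mem_support_iff.2 h2⟩ : d.support)))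
  intro κ1 κ2 h
  apply Subtype.ext; funext v
  exact congrArg Subtype.val (congrFun h v)

lemma card_iff (P Q : (V → ℕ) → Prop) (h : ∀ κ, P κ ↔ Q κ) (d : ℕ →₀ ℕ) :
    Nat.card {κ : V → ℕ // P κ ∧ fc κ = d} = Nat.card {κ : V → ℕ // Q κ ∧ fc κ = d} :=
  Nat.card_congr (Equiv.subtypeEquivRight fun κ => by rw [h κ])

lemma card_partition (P C : (V → ℕ) → Prop) (d : ℕ →₀ ℕ) :
    Nat.card {κ : V → ℕ // P κ ∧ fc κ = d} =
      Nat.card {κ : V → ℕ // (P κ ∧ C κ) ∧ fc κ = d} +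
      Nat.card {κ : V → ℕ // (P κ ∧ ¬ C κ) ∧ fc κ = d} := by
  classical
  have := finite_col (V := V) (fun κ => P κ ∧ C κ) d
  have := finite_col (V := V) (fun κ => P κ ∧ ¬ C κ) d
  have e : {κ : V → ℕ // (P κ ∧ C κ) ∧ fc κ = d} ⊕ {κ : V → ℕ // (P κ ∧ ¬ C κ) ∧ fc κ = d}
      ≃ {κ : V → ℕ // P κ ∧ fc κ = d} := by
    refine ⟨fun x => x.elim (fun κ => ⟨κ.1, κ.2.1.1, κ.2.2⟩) (fun κ => ⟨κ.1, κ.2.1.1, κ.2.2⟩),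
      fun κ => if h : C κ.1 then Sum.inl ⟨κ.1, ⟨κ.2.1, h⟩, κ.2.2⟩ else
        Sum.inr ⟨κ.1, ⟨κ.2.1, h⟩, κ.2.2⟩, ?_, ?_⟩
    · rintro (⟨κ, ⟨hP, hC⟩, hd⟩ | ⟨κ, ⟨hP, hC⟩, hd⟩) <;> simp [hC]
    · rintro ⟨κ, hP, hd⟩
      by_cases h : C κ <;> simp [h]
  rw [← Nat.card_congr e, Nat.card_sum]

lemma fc_comp_equiv {W : Type} [Fintype W] (e : W ≃ V) (κ : V → ℕ) :
    fc (κ ∘ e) = fc κ := by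
  unfold fc
  exact Fintype.sum_equiv e _ _ (fun w => rfl)

lemma card_transport {W : Type} [Fintype W] (e : W ≃ V)
    (P : (W → ℕ) → Prop) (Q : (V → ℕ) → Prop) (h : ∀ κ : V → ℕ, P (κ ∘ e) ↔ Q κ)
    (d : ℕ →₀ ℕ) :
    Nat.card {κ : W → ℕ // P κ ∧ fc κ = d} = Nat.card {κ : V → ℕ // Q κ ∧ fc κ = d} := by
  apply Nat.card_congr
  refine ⟨fun κ => ⟨κ.1 ∘ e.symm, ?_, ?_⟩, fun κ => ⟨κ.1 ∘ e, ?_, ?_⟩, ?_, ?_⟩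
  · rw [← h]
    have : (κ.1 ∘ e.symm) ∘ e = κ.1 := by funext w; simp
    rw [this]; exact κ.2.1
  · rw [fc_comp_equiv e.symm]; exact κ.2.2
  · rw [h]; exact κ.2.1
  · rw [fc_comp_equiv e]; exact κ.2.2
  · rintro ⟨κ, _, _⟩; apply Subtype.ext; funext w; simp
  · rintro ⟨κ, _, _⟩; apply Subtype.ext; funext v; simp

lemma nat_card_sigma {ι : Type} [Fintype ι] (f : ι → Type) [∀ i, Finite (f i)] :
    Nat.card (Sigma f) = ∑ i, Nat.card (f i) := by
  classical
  letI := fun i => Fintype.ofFinite (f i)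
  simp [Nat.card_eq_fintype_card, Fintype.card_sigma]

lemma fc_sum {W : Type} [Fintype W] (κ : V ⊕ W → ℕ) :
    fc κ = fc (κ ∘ Sum.inl) + fc (κ ∘ Sum.inr) := by
  unfold fc
  exact Fintype.sum_sum_type _

lemma card_sum_split {W : Type} [Fintype W]
    (P : (V → ℕ) → Prop) (Q : (W → ℕ) → Prop) (d : ℕ →₀ ℕ) :
    Nat.card {κ : V ⊕ W → ℕ // (P (κ ∘ Sum.inl) ∧ Q (κ ∘ Sum.inr)) ∧ fc κ = d} =
      ∑ p ∈ Finset.HasAntidiagonal.antidiagonal d,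
        Nat.card {κ : V → ℕ // P κ ∧ fc κ = p.1} * Nat.card {κ : W → ℕ // Q κ ∧ fc κ = p.2} := by
  classical
  set S := {κ : V ⊕ W → ℕ // (P (κ ∘ Sum.inl) ∧ Q (κ ∘ Sum.inr)) ∧ fc κ = d} with hS
  have finS : Finite S := finite_col _ d
  set g : S → (Finset.HasAntidiagonal.antidiagonal d : Finset ((ℕ →₀ ℕ) × (ℕ →₀ ℕ))) :=
    fun κ => ⟨(fc (κ.1 ∘ Sum.inl), fc (κ.1 ∘ Sum.inr)), by
      rw [Finset.HasAntidiagonal.mem_antidiagonal, ← fc_sum, κ.2.2]⟩ with hg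
  have e := Equiv.sigmaFiberEquiv g
  rw [← Nat.card_congr e, nat_card_sigma, ← Finset.sum_coe_sort (Finset.HasAntidiagonal.antidiagonal d)]
  apply Finset.sum_congr rfl
  intro p _
  rw [← Nat.card_prod]
  apply Nat.card_congr
  have key : ∀ y : {κ : V → ℕ // P κ ∧ fc κ = (p : (ℕ →₀ ℕ) × (ℕ →₀ ℕ)).1} ×
      {κ : W → ℕ // Q κ ∧ fc κ = (p : (ℕ →₀ ℕ) × (ℕ →₀ ℕ)).2},
      fc (Sum.elim y.1.1 y.2.1) = d := by
    intro y
    rw [fc_sum]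
    have h1 : Sum.elim y.1.1 y.2.1 ∘ Sum.inl = y.1.1 := rfl
    have h2 : Sum.elim y.1.1 y.2.1 ∘ Sum.inr = y.2.1 := rfl
    rw [h1, h2, y.1.2.2, y.2.2.2]
    exact (Finset.HasAntidiagonal.mem_antidiagonal).1 p.2
  refine ⟨fun x => (⟨x.1.1 ∘ Sum.inl, x.1.2.1.1,
      congrArg (fun q => (q.1 : (ℕ →₀ ℕ) × (ℕ →₀ ℕ)).1) x.2⟩,
      ⟨x.1.1 ∘ Sum.inr, x.1.2.1.2,
      congrArg (fun q => (q.1 : (ℕ →₀ ℕ) × (ℕ →₀ ℕ)).2) x.2⟩),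
    fun y => ⟨⟨Sum.elim y.1.1 y.2.1, ⟨y.1.2.1, y.2.2.1⟩, key y⟩, ?_⟩, ?_, ?_⟩
  · apply Subtype.ext
    show ((fc (Sum.elim y.1.1 y.2.1 ∘ Sum.inl), fc (Sum.elim y.1.1 y.2.1 ∘ Sum.inr))
        : (ℕ →₀ ℕ) × (ℕ →₀ ℕ)) = (p : (ℕ →₀ ℕ) × (ℕ →₀ ℕ))
    have h1 : Sum.elim y.1.1 y.2.1 ∘ Sum.inl = y.1.1 := rfl
    have h2 : Sum.elim y.1.1 y.2.1 ∘ Sum.inr = y.2.1 := rfl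
    rw [h1, h2, y.1.2.2, y.2.2.2]
  · rintro ⟨⟨κ, hκ⟩, hgx⟩
    apply Subtype.ext
    apply Subtype.ext
    funext x
    cases x <;> rfl
  · rintro ⟨⟨κ1, h1⟩, ⟨κ2, h2⟩⟩
    apply Prod.ext <;> exact Subtype.ext rfl



variable (b : ℕ)

def U : SimpleGraph (Fin (4 + (b + 1))) :=
  SimpleGraph.fromRel (fun i j => ((i : ℕ) + 1 = (j : ℕ) ∧ (j : ℕ) ≠ 4) ∨ ((i : ℕ) = 0 ∧ (j : ℕ) = 3))

def W : SimpleGraph (Fin (4 + (b + 1))) :=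
  SimpleGraph.fromRel (fun i j => (i : ℕ) + 1 = (j : ℕ) ∨ ((i : ℕ) = 0 ∧ ((j : ℕ) = 3 ∨ (j : ℕ) = 4)))

lemma U_adj (a c : Fin (4 + (b + 1))) :
    (U b).Adj a c ↔ (a : ℕ) ≠ (c : ℕ) ∧
      ((((a : ℕ) + 1 = (c : ℕ) ∧ (c : ℕ) ≠ 4) ∨ ((a : ℕ) = 0 ∧ (c : ℕ) = 3)) ∨
       (((c : ℕ) + 1 = (a : ℕ) ∧ (a : ℕ) ≠ 4) ∨ ((c : ℕ) = 0 ∧ (a : ℕ) = 3))) := by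
  simp only [U, SimpleGraph.fromRel_adj, Ne, Fin.ext_iff]

lemma T_adj_iff (a c : Fin (4 + (b + 1))) :
    (tadpole 4 (b + 1)).Adj a c ↔
      (U b).Adj a c ∨ ((a : ℕ) = 3 ∧ (c : ℕ) = 4) ∨ ((a : ℕ) = 4 ∧ (c : ℕ) = 3) := by
  rw [U_adj]
  simp only [tadpole, SimpleGraph.fromRel_adj, Ne, Fin.ext_iff]
  have := a.isLt; have := c.isLt
  omega

lemma W_adj_iff (a c : Fin (4 + (b + 1))) :
    (W b).Adj a c ↔
      (U b).Adj a c ∨ (((a : ℕ) = 3 ∧ (c : ℕ) = 4) ∨ ((a : ℕ) = 4 ∧ (c : ℕ) = 3)) ∨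
        (((a : ℕ) = 0 ∧ (c : ℕ) = 4) ∨ ((a : ℕ) = 4 ∧ (c : ℕ) = 0)) := by
  rw [U_adj]
  simp only [W, SimpleGraph.fromRel_adj, Ne, Fin.ext_iff]
  have := a.isLt; have := c.isLt
  omega

lemma path_adj (m : ℕ) (i j : Fin m) :
    (path m).Adj i j ↔ (i : ℕ) ≠ (j : ℕ) ∧ ((i : ℕ) + 1 = (j : ℕ) ∨ (j : ℕ) + 1 = (i : ℕ)) := by
  simp [path, SimpleGraph.fromRel_adj, Ne, Fin.ext_iff]

lemma cycle_adj (m : ℕ) (i j : Fin m) :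
    (cycle m).Adj i j ↔ (i : ℕ) ≠ (j : ℕ) ∧
      (((i : ℕ) + 1) % m = (j : ℕ) ∨ ((j : ℕ) + 1) % m = (i : ℕ)) := by
  simp [cycle, SimpleGraph.fromRel_adj, Ne, Fin.ext_iff]


def phiFun (x : Option (Fin (4 + b))) : Fin (4 + (b + 1)) :=
  match x with
  | none => ⟨3, by omega⟩
  | some k => if (k : ℕ) < 3 then ⟨(k : ℕ), by have := k.isLt; omega⟩ else ⟨(k : ℕ) + 1, by have := k.isLt; omega⟩

def phiInv (j : Fin (4 + (b + 1))) : Option (Fin (4 + b)) :=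
  if h : (j : ℕ) < 3 then some ⟨(j : ℕ), by omega⟩
  else if (j : ℕ) = 3 then none
  else some ⟨(j : ℕ) - 1, by have := j.isLt; omega⟩

lemma phiFun_none_val : ((phiFun b none : Fin (4 + (b + 1))) : ℕ) = 3 := rfl

lemma phiFun_some_val (k : Fin (4 + b)) :
    ((phiFun b (some k) : Fin (4 + (b + 1))) : ℕ) = if (k : ℕ) < 3 then (k : ℕ) else (k : ℕ) + 1 := by
  rw [phiFun]
  split_ifs <;> rfl

def phi : Option (Fin (4 + b)) ≃ Fin (4 + (b + 1)) where
  toFun := phiFun b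
  invFun := phiInv b
  left_inv := by
    rintro (_ | k)
    · rfl
    · by_cases h : (k : ℕ) < 3
      · have : phiFun b (some k) = ⟨(k : ℕ), by have := k.isLt; omega⟩ := by rw [phiFun]; simp [h]
        rw [this, phiInv]
        simp [h]
      · have : phiFun b (some k) = ⟨(k : ℕ) + 1, by have := k.isLt; omega⟩ := by
          rw [phiFun]; simp [h]
        rw [this, phiInv]
        have h1 : ¬ ((k : ℕ) + 1 < 3) := by omega
        have h2 : ¬ ((k : ℕ) + 1 = 3) := by omega
        simp only [h1, h2, if_false]
        simp
  right_inv := by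
    intro j
    rw [phiInv]
    split_ifs with h1 h2
    · have : phiFun b (some ⟨(j : ℕ), by omega⟩) = ⟨(j : ℕ), by omega⟩ := by
        rw [phiFun]; simp [h1]
      rw [this]
    · apply Fin.ext
      rw [phiFun_none_val, h2]
    · have h3 : ¬ ((j : ℕ) - 1 < 3) := by omega
      apply Fin.ext
      rw [show phiFun b (some ⟨(j : ℕ) - 1, by have := j.isLt; omega⟩) =
          ⟨(j : ℕ) - 1 + 1, by have := j.isLt; omega⟩ from by rw [phiFun]; simp [h3]]
      show (j : ℕ) - 1 + 1 = (j : ℕ)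
      omega


def rhoFun (x : Fin (4 + (b + 1))) : Fin (4 + (b + 1)) :=
  ⟨if (x : ℕ) < 4 then ((x : ℕ) + 1) % 4 else (x : ℕ), by
    split_ifs with h
    · omega
    · exact x.isLt⟩

def rhoInv (x : Fin (4 + (b + 1))) : Fin (4 + (b + 1)) :=
  ⟨if (x : ℕ) < 4 then ((x : ℕ) + 3) % 4 else (x : ℕ), by
    split_ifs with h
    · omega
    · exact x.isLt⟩

lemma rhoFun_val (x : Fin (4 + (b + 1))) :
    ((rhoFun b x : Fin (4 + (b + 1))) : ℕ) = if (x : ℕ) < 4 then ((x : ℕ) + 1) % 4 else (x : ℕ) := rfl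

lemma rhoInv_val (x : Fin (4 + (b + 1))) :
    ((rhoInv b x : Fin (4 + (b + 1))) : ℕ) = if (x : ℕ) < 4 then ((x : ℕ) + 3) % 4 else (x : ℕ) := rfl

def rho : Fin (4 + (b + 1)) ≃ Fin (4 + (b + 1)) where
  toFun := rhoFun b
  invFun := rhoInv b
  left_inv := by
    intro x
    apply Fin.ext
    rw [rhoInv_val, rhoFun_val]
    split_ifs <;> omega
  right_inv := by
    intro x
    apply Fin.ext
    rw [rhoFun_val, rhoInv_val]
    split_ifs <;> omega

lemma rho_val (x : Fin (4 + (b + 1))) :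
    ((rho b x : Fin (4 + (b + 1))) : ℕ) = if (x : ℕ) < 4 then ((x : ℕ) + 1) % 4 else (x : ℕ) := rfl

lemma rho_symm_val (x : Fin (4 + (b + 1))) :
    (((rho b).symm x : Fin (4 + (b + 1))) : ℕ) =
      if (x : ℕ) < 4 then ((x : ℕ) + 3) % 4 else (x : ℕ) := rfl

lemma rho_adj (a c : Fin (4 + (b + 1))) (h : (U b).Adj a c) : (U b).Adj (rho b a) (rho b c) := by
  rw [U_adj] at h ⊢
  rw [rho_val, rho_val]
  have := a.isLt; have := c.isLt
  split_ifs <;> omega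

lemma rho_symm_adj (a c : Fin (4 + (b + 1))) (h : (U b).Adj a c) :
    (U b).Adj ((rho b).symm a) ((rho b).symm c) := by
  rw [U_adj] at h ⊢
  rw [rho_symm_val, rho_symm_val]
  have := a.isLt; have := c.isLt
  split_ifs <;> omega

lemma rho_three : rho b ⟨3, by omega⟩ = ⟨0, by omega⟩ := by
  apply Fin.ext; rw [rho_val]; norm_num

lemma rho_four : rho b ⟨4, by omega⟩ = ⟨4, by omega⟩ := by
  apply Fin.ext; rw [rho_val]; norm_num

lemma rho_symm_zero : (rho b).symm ⟨0, by omega⟩ = ⟨3, by omega⟩ := by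
  apply Fin.ext; rw [rho_symm_val]; norm_num

lemma rho_symm_four : (rho b).symm ⟨4, by omega⟩ = ⟨4, by omega⟩ := by
  apply Fin.ext; rw [rho_symm_val]; norm_num


lemma proper_T_iff (κ : Fin (4 + (b + 1)) → ℕ) :
    proper (tadpole 4 (b + 1)) κ ↔
      proper (U b) κ ∧ κ ⟨3, by omega⟩ ≠ κ ⟨4, by omega⟩ := by
  constructor
  · intro h
    refine ⟨fun a c hac => h a c ((T_adj_iff b a c).2 (Or.inl hac)), ?_⟩
    exact h _ _ ((T_adj_iff b _ _).2 (Or.inr (Or.inl ⟨rfl, rfl⟩)))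
  · rintro ⟨hU, h34⟩ a c hac
    rcases (T_adj_iff b a c).1 hac with h | ⟨h1, h2⟩ | ⟨h1, h2⟩
    · exact hU a c h
    · rw [show a = ⟨3, by omega⟩ from Fin.ext h1, show c = ⟨4, by omega⟩ from Fin.ext h2]
      exact h34
    · rw [show a = ⟨4, by omega⟩ from Fin.ext h1, show c = ⟨3, by omega⟩ from Fin.ext h2]
      exact fun e => h34 e.symm

lemma proper_W_iff (κ : Fin (4 + (b + 1)) → ℕ) :
    proper (W b) κ ↔
      proper (U b) κ ∧ κ ⟨3, by omega⟩ ≠ κ ⟨4, by omega⟩ ∧ κ ⟨0, by omega⟩ ≠ κ ⟨4, by omega⟩ := by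
  constructor
  · intro h
    refine ⟨fun a c hac => h a c ((W_adj_iff b a c).2 (Or.inl hac)), ?_, ?_⟩
    · exact h _ _ ((W_adj_iff b _ _).2 (Or.inr (Or.inl (Or.inl ⟨rfl, rfl⟩))))
    · exact h _ _ ((W_adj_iff b _ _).2 (Or.inr (Or.inr (Or.inl ⟨rfl, rfl⟩))))
  · rintro ⟨hU, h34, h04⟩ a c hac
    rcases (W_adj_iff b a c).1 hac with h | (⟨h1, h2⟩ | ⟨h1, h2⟩) | (⟨h1, h2⟩ | ⟨h1, h2⟩)
    · exact hU a c h
    · rw [show a = ⟨3, by omega⟩ from Fin.ext h1, show c = ⟨4, by omega⟩ from Fin.ext h2]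
      exact h34
    · rw [show a = ⟨4, by omega⟩ from Fin.ext h1, show c = ⟨3, by omega⟩ from Fin.ext h2]
      exact fun e => h34 e.symm
    · rw [show a = ⟨0, by omega⟩ from Fin.ext h1, show c = ⟨4, by omega⟩ from Fin.ext h2]
      exact h04
    · rw [show a = ⟨4, by omega⟩ from Fin.ext h1, show c = ⟨0, by omega⟩ from Fin.ext h2]
      exact fun e => h04 e.symm

lemma adj_transport (hb : 1 ≤ b) (x y : Option (Fin (4 + b))) :
    ((Hgraph b hb).deleteEdges
        {s(some (⟨2, Nat.lt_add_right b (by norm_num)⟩ : Fin (4 + b)), some ⟨3, Nat.lt_add_right b (by norm_num)⟩)}).Adj x y ↔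
      (W b).Adj (phi b x) (phi b y) := by
  have phi_eq : ∀ z, phi b z = phiFun b z := fun z => rfl
  cases x <;> cases y <;>
    simp only [Hgraph, SimpleGraph.deleteEdges_adj, twin, tadpole, W,
      SimpleGraph.fromRel_adj, Set.mem_singleton_iff, Sym2.eq_iff, Option.some.injEq,
      phi_eq, Fin.ext_iff, phiFun_none_val, phiFun_some_val, Ne, reduceCtorEq,
      false_and, and_false, or_false, false_or, not_false_iff, and_true, true_and,
      true_or, or_true, not_true]
  case none.some k =>
    have := k.isLt
    split_ifs <;> (try simp only [or_false, false_or, and_false, false_and]) <;> omega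
  case some.none k =>
    have := k.isLt
    split_ifs <;> (try simp only [or_false, false_or, and_false, false_and]) <;> omega
  case some.some k k' =>
    have := k.isLt
    have := k'.isLt
    split_ifs <;>
      (try simp only [false_and, true_and, and_false, and_true, or_false, false_or,
        not_true, not_false_iff, true_or, or_true]) <;> omega

def esumFun (x : Fin (b + 1) ⊕ Fin 4) : Fin (4 + (b + 1)) :=
  match x with
  | Sum.inl i => ⟨4 + (i : ℕ), by have := i.isLt; omega⟩
  | Sum.inr j => ⟨(j : ℕ), by have := j.isLt; omega⟩

def esumInv (x : Fin (4 + (b + 1))) : Fin (b + 1) ⊕ Fin 4 :=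
  if h : (x : ℕ) < 4 then Sum.inr ⟨(x : ℕ), h⟩
  else Sum.inl ⟨(x : ℕ) - 4, by have := x.isLt; omega⟩

def esum : Fin (b + 1) ⊕ Fin 4 ≃ Fin (4 + (b + 1)) where
  toFun := esumFun b
  invFun := esumInv b
  left_inv := by
    rintro (i | j)
    · have := i.isLt
      have h : ¬ ((esumFun b (Sum.inl i) : ℕ) < 4) := by
        show ¬ (4 + (i : ℕ) < 4); omega
      rw [esumInv, dif_neg h]
      congr 1
      apply Fin.ext
      show 4 + (i : ℕ) - 4 = (i : ℕ)
      omega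
    · have := j.isLt
      have h : ((esumFun b (Sum.inr j) : ℕ) < 4) := by
        show ((j : ℕ) < 4); omega
      rw [esumInv, dif_pos h]
      exact congrArg Sum.inr (Fin.ext rfl)
  right_inv := by
    intro x
    by_cases h : (x : ℕ) < 4
    · rw [esumInv, dif_pos h]
      exact Fin.ext rfl
    · rw [esumInv, dif_neg h]
      apply Fin.ext
      show 4 + ((x : ℕ) - 4) = (x : ℕ)
      have := x.isLt
      omega

lemma esum_inl_val (i : Fin (b + 1)) : ((esum b (Sum.inl i) : Fin (4 + (b + 1))) : ℕ) = 4 + i := rfl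

lemma esum_inr_val (j : Fin 4) : ((esum b (Sum.inr j) : Fin (4 + (b + 1))) : ℕ) = j := rfl

lemma proper_esum_iff (κ : Fin (4 + (b + 1)) → ℕ) :
    (proper (path (b + 1)) ((κ ∘ esum b) ∘ Sum.inl) ∧
      proper (cycle 4) ((κ ∘ esum b) ∘ Sum.inr)) ↔ proper (U b) κ := by
  constructor
  · rintro ⟨hP, hC⟩ a c hac
    obtain ⟨x, rfl⟩ : ∃ x, esum b x = a := ⟨(esum b).symm a, (esum b).apply_symm_apply a⟩
    obtain ⟨y, rfl⟩ : ∃ y, esum b y = c := ⟨(esum b).symm c, (esum b).apply_symm_apply c⟩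
    rw [U_adj] at hac
    rcases x with i | j <;> rcases y with i' | j'
    · refine hP i i' ?_
      rw [path_adj]
      rw [esum_inl_val, esum_inl_val] at hac
      omega
    · exfalso
      rw [esum_inl_val, esum_inr_val] at hac
      have := i.isLt; have := j'.isLt
      omega
    · exfalso
      rw [esum_inr_val, esum_inl_val] at hac
      have := j.isLt; have := i'.isLt
      omega
    · refine hC j j' ?_
      rw [cycle_adj]
      rw [esum_inr_val, esum_inr_val] at hac
      have := j.isLt; have := j'.isLt
      omega
  · intro hU
    constructor
    · intro i i' hii
      refine hU (esum b (Sum.inl i)) (esum b (Sum.inl i')) ?_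
      rw [path_adj] at hii
      rw [U_adj, esum_inl_val, esum_inl_val]
      omega
    · intro j j' hjj
      refine hU (esum b (Sum.inr j)) (esum b (Sum.inr j')) ?_
      rw [cycle_adj] at hjj
      rw [U_adj, esum_inr_val, esum_inr_val]
      have := j.isLt; have := j'.isLt
      omega

lemma proper_H'_iff (hb : 1 ≤ b) (κ : Fin (4 + (b + 1)) → ℕ) :
    proper ((Hgraph b hb).deleteEdges
        {s(some (⟨2, Nat.lt_add_right b (by norm_num)⟩ : Fin (4 + b)), some ⟨3, Nat.lt_add_right b (by norm_num)⟩)}) (κ ∘ phi b) ↔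
      proper (W b) κ := by
  constructor
  · intro h a c hac
    have h2 := h ((phi b).symm a) ((phi b).symm c) (by
      rw [adj_transport b hb, (phi b).apply_symm_apply, (phi b).apply_symm_apply]
      exact hac)
    simpa using h2
  · intro h x y hxy
    exact h _ _ ((adj_transport b hb x y).1 hxy)

lemma card_reflect (d : ℕ →₀ ℕ) :
    Nat.card {κ : Fin (4 + (b + 1)) → ℕ //
        (proper (U b) κ ∧ κ ⟨0, by omega⟩ = κ ⟨4, by omega⟩) ∧ fc κ = d} =
      Nat.card {κ : Fin (4 + (b + 1)) → ℕ //
        (proper (U b) κ ∧ κ ⟨3, by omega⟩ = κ ⟨4, by omega⟩) ∧ fc κ = d} := by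
  apply Nat.card_congr
  refine ⟨fun κ => ⟨κ.1 ∘ rho b, ⟨fun a c h => κ.2.1.1 _ _ (rho_adj b a c h), ?_⟩, ?_⟩,
    fun κ => ⟨κ.1 ∘ (rho b).symm, ⟨fun a c h => κ.2.1.1 _ _ (rho_symm_adj b a c h), ?_⟩, ?_⟩,
    ?_, ?_⟩
  · show κ.1 (rho b ⟨3, by omega⟩) = κ.1 (rho b ⟨4, by omega⟩)
    rw [rho_three, rho_four]
    exact κ.2.1.2
  · exact (fc_comp_equiv (rho b) κ.1).trans κ.2.2
  · show κ.1 ((rho b).symm ⟨0, by omega⟩) = κ.1 ((rho b).symm ⟨4, by omega⟩)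
    rw [rho_symm_zero, rho_symm_four]
    exact κ.2.1.2
  · exact (fc_comp_equiv (rho b).symm κ.1).trans κ.2.2
  · rintro ⟨κ, h1, h2⟩
    apply Subtype.ext
    funext v
    show κ (rho b ((rho b).symm v)) = κ v
    rw [(rho b).apply_symm_apply]
  · rintro ⟨κ, h1, h2⟩
    apply Subtype.ext
    funext v
    show κ ((rho b).symm (rho b v)) = κ v
    rw [(rho b).symm_apply_apply]

end CsfAux

open CsfAux in
/-- For every `b ≥ 1`, deleting the edge `v_3 v_4` from `H_b` gives
`X_{H_b − {v_3v_4}} = 2 X_{T^{4,b+1}} − X_{P_{b+1}} · X_{C_4}`. -/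
theorem csf_Hgraph_deleteEdge_v3v4 (b : ℕ) (hb : 1 ≤ b) :
    csf ((Hgraph b hb).deleteEdges
        {s(some (⟨2, by omega⟩ : Fin (4 + b)), some ⟨3, by omega⟩)}) =
      2 * csf (tadpole 4 (b + 1)) - csf (path (b + 1)) * csf (cycle 4) := by
  classical
  apply MvPowerSeries.ext
  intro d
  set Egraph := (Hgraph b hb).deleteEdges
      {s(some (⟨2, by omega⟩ : Fin (4 + b)), some ⟨3, by omega⟩)} with hE
  set x0 : Fin (4 + (b + 1)) := ⟨0, by omega⟩
  set x3 : Fin (4 + (b + 1)) := ⟨3, by omega⟩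
  set x4 : Fin (4 + (b + 1)) := ⟨4, by omega⟩
  set N : ((Fin (4 + (b + 1)) → ℕ) → Prop) → ℕ :=
    fun P => Nat.card {κ : Fin (4 + (b + 1)) → ℕ // P κ ∧ fc κ = d} with hN
  have adj03 : (U b).Adj x0 x3 := by
    rw [U_adj]
    have e0 : (x0 : ℕ) = 0 := rfl
    have e3 : (x3 : ℕ) = 3 := rfl
    omega
  -- the pieces
  have hsum : (∑ p ∈ Finset.HasAntidiagonal.antidiagonal d,
      Nat.card {κ : Fin (b + 1) → ℕ // proper (path (b + 1)) κ ∧ fc κ = p.1} *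
      Nat.card {κ : Fin 4 → ℕ // proper (cycle 4) κ ∧ fc κ = p.2}) =
      N (fun κ => proper (U b) κ) := by
    rw [← card_sum_split]
    exact card_transport (esum b) _ _ (fun κ => proper_esum_iff b κ) d
  have h1 : N (fun κ => proper (U b) κ) =
      N (fun κ => proper (U b) κ ∧ κ x3 = κ x4) +
      N (fun κ => proper (U b) κ ∧ ¬ κ x3 = κ x4) :=
    card_partition _ _ d
  have h2 : N (fun κ => proper (U b) κ ∧ ¬ κ x3 = κ x4) =
      N (fun κ => (proper (U b) κ ∧ ¬ κ x3 = κ x4) ∧ κ x0 = κ x4) +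
      N (fun κ => (proper (U b) κ ∧ ¬ κ x3 = κ x4) ∧ ¬ κ x0 = κ x4) :=
    card_partition _ _ d
  have h3 : N (fun κ => (proper (U b) κ ∧ ¬ κ x3 = κ x4) ∧ κ x0 = κ x4) =
      N (fun κ => proper (U b) κ ∧ κ x0 = κ x4) := by
    apply card_iff
    intro κ
    constructor
    · rintro ⟨⟨hU, _⟩, h04⟩
      exact ⟨hU, h04⟩
    · rintro ⟨hU, h04⟩
      exact ⟨⟨hU, fun h34 => (hU _ _ adj03) (h04.trans h34.symm)⟩, h04⟩
  have h4 : N (fun κ => proper (U b) κ ∧ κ x0 = κ x4) =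
      N (fun κ => proper (U b) κ ∧ κ x3 = κ x4) := card_reflect b d
  have hT : csf (tadpole 4 (b + 1)) d =
      (N (fun κ => proper (U b) κ ∧ ¬ κ x3 = κ x4) : ℚ) := by
    rw [csf_coeff]
    congr 1
    apply card_iff
    intro κ
    exact proper_T_iff b κ
  have hH : csf Egraph d =
      (N (fun κ => (proper (U b) κ ∧ ¬ κ x3 = κ x4) ∧ ¬ κ x0 = κ x4) : ℚ) := by
    rw [csf_coeff]
    congr 1
    rw [card_transport (phi b)
      (fun κ => proper Egraph κ)
      (fun κ => proper (W b) κ) (fun κ => proper_H'_iff b hb κ) d]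
    apply card_iff
    intro κ
    rw [proper_W_iff]
    constructor
    · rintro ⟨a1, a2, a3⟩; exact ⟨⟨a1, a2⟩, a3⟩
    · rintro ⟨⟨a1, a2⟩, a3⟩; exact ⟨a1, a2, a3⟩
  -- numeric identity
  have key : N (fun κ => (proper (U b) κ ∧ ¬ κ x3 = κ x4) ∧ ¬ κ x0 = κ x4) +
      N (fun κ => proper (U b) κ) =
      2 * N (fun κ => proper (U b) κ ∧ ¬ κ x3 = κ x4) := by
    rw [h1, h2, h3, h4]
    ring
  -- assemble
  rw [map_sub]
  have cL : (MvPowerSeries.coeff d) (csf Egraph) =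
      (N (fun κ => (proper (U b) κ ∧ ¬ κ x3 = κ x4) ∧ ¬ κ x0 = κ x4) : ℚ) := hH
  have cT : (MvPowerSeries.coeff d) (2 * csf (tadpole 4 (b + 1))) =
      2 * (N (fun κ => proper (U b) κ ∧ ¬ κ x3 = κ x4) : ℚ) := by
    rw [two_mul, map_add]
    show csf (tadpole 4 (b + 1)) d + csf (tadpole 4 (b + 1)) d = _
    rw [hT]; ring
  have cPC : (∑ p ∈ Finset.HasAntidiagonal.antidiagonal d,
      (MvPowerSeries.coeff p.1) (csf (path (b + 1))) *
      (MvPowerSeries.coeff p.2) (csf (cycle 4))) =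
      (N (fun κ => proper (U b) κ) : ℚ) := by
    rw [← hsum, Nat.cast_sum]
    apply Finset.sum_congr rfl
    intro p _
    rw [Nat.cast_mul]
    show csf (path (b + 1)) p.1 * csf (cycle 4) p.2 = _
    rw [csf_coeff, csf_coeff]
  rw [MvPowerSeries.coeff_mul d (csf (path (b + 1))) (csf (cycle 4)), cL, cT, cPC]
  have := congrArg (fun m : ℕ => (m : ℚ)) key
  push_cast at this
  linarith
end

section
/- For all integers m ≥ n ≥ 1, the chromatic symmetric function of P_{m,n} satisfies X_{P_{m,n}} = X_{P_{m+1}} + e_1 · X_{P_m} − X_{P_n} · X_{P_{m−n+1}}. -/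
open scoped BigOperators

/-- The graph `P_{m,n}` (for `1 ≤ n ≤ m`): the path `P_m` on the vertices
`0, …, m-1` together with an extra vertex `m` (the paper's `v_{m+1}`) attached as a
leaf to the vertex `n - 1` (the paper's `v_n`, the `n`-th vertex of the path). -/
def pathLeaf (m n : ℕ) : SimpleGraph (Fin (m + 1)) :=
  SimpleGraph.fromRel (fun i j =>
    ((i : ℕ) + 1 = (j : ℕ) ∧ (j : ℕ) < m) ∨ ((i : ℕ) = n - 1 ∧ (j : ℕ) = m))


section Fib
variable {V W : Type} [Fintype V] [Fintype W]

/-- The fiber-size finsupp of a coloring. -/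
noncomputable def fib (κ : V → ℕ) : ℕ →₀ ℕ := ∑ v, Finsupp.single (κ v) 1

lemma fib_apply (κ : V → ℕ) (i : ℕ) : fib κ i = Nat.card {v // κ v = i} := by
  classical
  rw [Nat.card_eq_fintype_card, Fintype.card_subtype]
  simp only [fib, Finsupp.finset_sum_apply, Finsupp.single_apply, Finset.card_filter]

lemma mem_support_of_fib {κ : V → ℕ} (v : V) : κ v ∈ (fib κ).support := by
  rw [Finsupp.mem_support_iff, fib_apply]
  have : Nonempty {w // κ w = κ v} := ⟨⟨v, rfl⟩⟩
  simp [Nat.card_pos]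

/-- The colorings of `G` with fiber sizes `d`. -/
abbrev Col (G : SimpleGraph V) (d : ℕ →₀ ℕ) : Type :=
  {κ : V → ℕ // (∀ a b : V, G.Adj a b → κ a ≠ κ b) ∧ fib κ = d}

instance (G : SimpleGraph V) (d : ℕ →₀ ℕ) : Finite (Col G d) := by
  classical
  refine Finite.of_injective (fun κ => (fun v => (⟨κ.1 v, ?_⟩ : {x // x ∈ d.support}) : V → {x // x ∈ d.support})) ?_
  · have := mem_support_of_fib (κ := κ.1) v
    rwa [κ.2.2] at this
  · intro κ κ' h
    apply Subtype.ext
    funext v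
    exact congrArg Subtype.val (congrFun h v)

lemma csf_apply {G : SimpleGraph V} (d : ℕ →₀ ℕ) : csf G d = (Nat.card (Col G d) : ℚ) := by
  unfold csf Col
  norm_cast
  apply Nat.card_congr
  apply Equiv.subtypeEquivRight
  intro κ
  constructor
  · rintro ⟨h1, h2⟩
    exact ⟨h1, by ext i; rw [fib_apply]; exact h2 i⟩
  · rintro ⟨h1, h2⟩
    exact ⟨h1, fun i => by rw [← fib_apply, h2]⟩

lemma fib_comp_equiv (e : V ≃ W) (κ : W → ℕ) : fib (κ ∘ e) = fib κ := by
  unfold fib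
  exact Equiv.sum_comp e (fun w => Finsupp.single (κ w) 1)

lemma csf_congr {G : SimpleGraph V} {H : SimpleGraph W} (e : V ≃ W)
    (h : ∀ a b, G.Adj a b ↔ H.Adj (e a) (e b)) : csf G = csf H := by
  funext d
  rw [csf_apply, csf_apply]
  congr 1
  apply Nat.card_congr
  refine ⟨fun κ => ⟨κ.1 ∘ e.symm, ?_, ?_⟩, fun κ => ⟨κ.1 ∘ e, ?_, ?_⟩, ?_, ?_⟩
  · intro a b hab
    have := κ.2.1 (e.symm a) (e.symm b) (by rw [h]; simpa using hab)
    simpa using this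
  · rw [fib_comp_equiv e.symm, κ.2.2]
  · intro a b hab
    exact κ.2.1 (e a) (e b) ((h a b).mp hab)
  · rw [fib_comp_equiv e, κ.2.2]
  · intro κ; apply Subtype.ext; funext v; simp
  · intro κ; apply Subtype.ext; funext v; simp

end Fib

section Prod
variable {V W : Type} [Fintype V] [Fintype W]

/-- Disjoint union of two graphs. -/
def sumGraph (G : SimpleGraph V) (H : SimpleGraph W) : SimpleGraph (V ⊕ W) where
  Adj x y := match x, y with
    | Sum.inl a, Sum.inl b => G.Adj a b
    | Sum.inr a, Sum.inr b => H.Adj a b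
    | _, _ => False
  symm := ⟨by rintro (a|a) (b|b) h <;> simp_all <;> exact h.symm⟩
  loopless := ⟨by rintro (a|a) h <;> simp_all⟩

lemma fib_sum (κ : V ⊕ W → ℕ) : fib κ = fib (κ ∘ Sum.inl) + fib (κ ∘ Sum.inr) := by
  unfold fib
  rw [Fintype.sum_sum_type]
  rfl

lemma csf_sumGraph (G : SimpleGraph V) (H : SimpleGraph W) :
    csf (sumGraph G H) = csf G * csf H := by
  classical
  ext d
  rw [MvPowerSeries.coeff_apply, MvPowerSeries.coeff_mul, csf_apply]
  have key : Nat.card (Col (sumGraph G H) d)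
      = ∑ p ∈ Finset.HasAntidiagonal.antidiagonal d, Nat.card (Col G p.1) * Nat.card (Col H p.2) := by
    have e : Col (sumGraph G H) d ≃
        Σ p : Finset.HasAntidiagonal.antidiagonal d, Col G p.1.1 × Col H p.1.2 := by
      refine ⟨fun κ => ⟨⟨(fib (κ.1 ∘ Sum.inl), fib (κ.1 ∘ Sum.inr)), ?_⟩,
        ⟨κ.1 ∘ Sum.inl, fun a b hab => κ.2.1 (Sum.inl a) (Sum.inl b) hab, rfl⟩,
        ⟨κ.1 ∘ Sum.inr, fun a b hab => κ.2.1 (Sum.inr a) (Sum.inr b) hab, rfl⟩⟩,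
        fun x => ⟨Sum.elim x.2.1.1 x.2.2.1, ?_, ?_⟩, ?_, ?_⟩
      · rw [Finset.HasAntidiagonal.mem_antidiagonal, ← fib_sum, κ.2.2]
      · rintro (a|a) (b|b) hab
        · exact x.2.1.2.1 a b hab
        · exact hab.elim
        · exact hab.elim
        · exact x.2.2.2.1 a b hab
      · rw [fib_sum]
        have h1 : (Sum.elim x.2.1.1 x.2.2.1 : V ⊕ W → ℕ) ∘ Sum.inl = x.2.1.1 := rfl
        have h2 : (Sum.elim x.2.1.1 x.2.2.1 : V ⊕ W → ℕ) ∘ Sum.inr = x.2.2.1 := rfl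
        rw [h1, h2, x.2.1.2.2, x.2.2.2.2]
        exact (Finset.HasAntidiagonal.mem_antidiagonal.mp x.1.2)
      · intro κ
        apply Subtype.ext
        funext x
        cases x <;> rfl
      · rintro ⟨⟨⟨p1, p2⟩, hp⟩, ⟨κ1, h1⟩, ⟨κ2, h2⟩⟩
        have e1 : (Sum.elim κ1 κ2 : V ⊕ W → ℕ) ∘ Sum.inl = κ1 := rfl
        have e2 : (Sum.elim κ1 κ2 : V ⊕ W → ℕ) ∘ Sum.inr = κ2 := rfl
        have hp1 : fib ((Sum.elim κ1 κ2 : V ⊕ W → ℕ) ∘ Sum.inl) = p1 := by rw [e1, h1.2]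
        have hp2 : fib ((Sum.elim κ1 κ2 : V ⊕ W → ℕ) ∘ Sum.inr) = p2 := by rw [e2, h2.2]
        subst hp1
        subst hp2
        rfl
    rw [Nat.card_congr e]
    haveI : ∀ (q : ℕ →₀ ℕ), Fintype (Col G q) := fun q => Fintype.ofFinite _
    haveI : ∀ (q : ℕ →₀ ℕ), Fintype (Col H q) := fun q => Fintype.ofFinite _
    rw [Nat.card_eq_fintype_card, Fintype.card_sigma]
    rw [← Finset.sum_attach (Finset.HasAntidiagonal.antidiagonal d) (fun p => Nat.card (Col G p.1) * Nat.card (Col H p.2))]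
    congr 1
    funext p
    rw [Fintype.card_prod, Nat.card_eq_fintype_card, Nat.card_eq_fintype_card]
  rw [key]
  push_cast
  apply Finset.sum_congr rfl
  intro p _
  rw [MvPowerSeries.coeff_apply, MvPowerSeries.coeff_apply, csf_apply, csf_apply]

end Prod

lemma fib_fin_one (κ : Fin 1 → ℕ) : fib κ = Finsupp.single (κ 0) 1 := by
  unfold fib
  simp

lemma esym_one : esym 1 = csf (⊥ : SimpleGraph (Fin 1)) := by
  classical
  funext d
  show (if (∀ i, d i ≤ 1) ∧ (d.sum fun _ e => e) = 1 then (1:ℚ) else 0) = _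
  rw [csf_apply]
  by_cases h : (∀ i, d i ≤ 1) ∧ (d.sum fun _ e => e) = 1
  · rw [if_pos h]
    -- d = single c 1 for a unique c
    obtain ⟨hle, hsum⟩ := h
    have hne : d.support.Nonempty := by
      rw [Finsupp.support_nonempty_iff]
      intro h0
      rw [h0] at hsum
      simp at hsum
    obtain ⟨c, hc⟩ := hne
    have hdc : d c = 1 := by
      have h1 : 1 ≤ d c := Nat.one_le_iff_ne_zero.mpr (Finsupp.mem_support_iff.mp hc)
      exact le_antisymm (hle c) h1
    have hd : d = Finsupp.single c 1 := by
      ext j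
      rcases eq_or_ne j c with rfl | hj
      · simp [hdc]
      · rw [Finsupp.single_apply, if_neg (fun h' => hj h'.symm)]
        · by_contra hne0
          have hjs : j ∈ d.support := Finsupp.mem_support_iff.mpr hne0
          have : 2 ≤ d.sum fun _ e => e := by
            rw [Finsupp.sum]
            have : ({j, c} : Finset ℕ) ⊆ d.support := by
              intro x hx
              simp only [Finset.mem_insert, Finset.mem_singleton] at hx
              rcases hx with rfl | rfl
              exacts [hjs, hc]
            calc 2 = ∑ x ∈ ({j, c} : Finset ℕ), 1 := by simp [hj]
              _ ≤ ∑ x ∈ ({j, c} : Finset ℕ), d x := by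
                  apply Finset.sum_le_sum
                  intro x hx
                  simp only [Finset.mem_insert, Finset.mem_singleton] at hx
                  rcases hx with rfl | rfl
                  · exact Nat.one_le_iff_ne_zero.mpr (Finsupp.mem_support_iff.mp hjs)
                  · omega
              _ ≤ ∑ x ∈ d.support, d x := Finset.sum_le_sum_of_subset_of_nonneg this
                    (fun _ _ _ => Nat.zero_le _)
          omega
    have : Nat.card (Col (⊥ : SimpleGraph (Fin 1)) d) = 1 := by
      rw [Nat.card_eq_one_iff_unique]
      constructor
      · constructor
        rintro ⟨κ, -, hκ⟩ ⟨κ', -, hκ'⟩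
        rw [fib_fin_one] at hκ hκ'
        have h0 : κ 0 = κ' 0 :=
          Finsupp.single_left_injective one_ne_zero (hκ.trans hκ'.symm)
        apply Subtype.ext
        funext v
        rw [Subsingleton.elim v 0]
        exact h0
      · exact ⟨⟨fun _ => c, by simp, by rw [fib_fin_one, hd]⟩⟩
    rw [this]; norm_num
  · rw [if_neg h]
    have : IsEmpty (Col (⊥ : SimpleGraph (Fin 1)) d) := by
      constructor
      rintro ⟨κ, -, hκ⟩
      apply h
      rw [fib_fin_one] at hκ
      subst hκ
      constructor
      · intro i
        rw [Finsupp.single_apply]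
        split <;> omega
      · simp
    rw [Nat.card_of_isEmpty]
    norm_num

section Key

variable (m n : ℕ)

/-- `pathCut m n`: the path on `m+1` vertices with the edge `(n-1, n)` removed. -/
def pathCut : SimpleGraph (Fin (m + 1)) :=
  SimpleGraph.fromRel (fun i j => (i : ℕ) + 1 = (j : ℕ) ∧ (j : ℕ) ≠ n)

/-- `pathIso m`: the path on the first `m` vertices together with the isolated vertex `m`. -/
def pathIso : SimpleGraph (Fin (m + 1)) :=
  SimpleGraph.fromRel (fun i j => (i : ℕ) + 1 = (j : ℕ) ∧ (j : ℕ) < m)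

lemma proper_fromRel_iff {k : ℕ} {r : Fin k → Fin k → Prop} (hr : ∀ a b, r a b → a ≠ b)
    {κ : Fin k → ℕ} :
    (∀ a b, (SimpleGraph.fromRel r).Adj a b → κ a ≠ κ b) ↔ ∀ a b, r a b → κ a ≠ κ b := by
  simp only [SimpleGraph.fromRel_adj]
  constructor
  · intro h a b hab
    exact h a b ⟨hr a b hab, Or.inl hab⟩
  · rintro h a b ⟨hne, hab | hab⟩
    · exact h a b hab
    · exact (h b a hab).symm

def σf (hnm : n ≤ m) : Fin (m + 1) → Fin (m + 1) := fun i =>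
  if (i : ℕ) < n then i else if h : (i : ℕ) = m then ⟨n, by omega⟩ else
    ⟨(i : ℕ) + 1, by omega⟩

def σg (hnm : n ≤ m) : Fin (m + 1) → Fin (m + 1) := fun j =>
  if (j : ℕ) < n then j else if (j : ℕ) = n then ⟨m, by omega⟩ else
    ⟨(j : ℕ) - 1, by omega⟩

lemma σf_val (hnm : n ≤ m) (i : Fin (m + 1)) :
    ((σf m n hnm i : Fin (m + 1)) : ℕ) =
      if (i : ℕ) < n then (i : ℕ) else if (i : ℕ) = m then n else (i : ℕ) + 1 := by
  simp only [σf]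
  split_ifs <;> rfl

lemma σg_val (hnm : n ≤ m) (j : Fin (m + 1)) :
    ((σg m n hnm j : Fin (m + 1)) : ℕ) =
      if (j : ℕ) < n then (j : ℕ) else if (j : ℕ) = n then m else (j : ℕ) - 1 := by
  simp only [σg]
  split_ifs <;> rfl

/-- The permutation of `Fin (m+1)` that is the identity on `[0, n)` and rotates
`[n, m]` by sending `m` to `n` and `i` to `i+1` otherwise. -/
def σperm (hnm : n ≤ m) : Equiv.Perm (Fin (m + 1)) where
  toFun := σf m n hnm
  invFun := σg m n hnm
  left_inv := by
    intro i
    apply Fin.ext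
    rw [σg_val, σf_val]
    have := i.2
    split_ifs <;> omega
  right_inv := by
    intro j
    apply Fin.ext
    rw [σf_val, σg_val]
    have := j.2
    split_ifs <;> omega

lemma σperm_val (hnm : n ≤ m) (i : Fin (m + 1)) :
    ((σperm m n hnm i : Fin (m + 1)) : ℕ) =
      if (i : ℕ) < n then (i : ℕ) else if (i : ℕ) = m then n else (i : ℕ) + 1 :=
  σf_val m n hnm i

lemma σperm_symm_val (hnm : n ≤ m) (j : Fin (m + 1)) :
    (((σperm m n hnm).symm j : Fin (m + 1)) : ℕ) =
      if (j : ℕ) < n then (j : ℕ) else if (j : ℕ) = n then m else (j : ℕ) - 1 :=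
  σg_val m n hnm j


lemma proper_path_iff {k : ℕ} (κ : Fin k → ℕ) :
    (∀ a b, (path k).Adj a b → κ a ≠ κ b) ↔
      ∀ a b : Fin k, (a : ℕ) + 1 = (b : ℕ) → κ a ≠ κ b := by
  rw [path, proper_fromRel_iff (fun a b h => Fin.ne_of_val_ne (by omega))]

lemma proper_cut_iff (κ : Fin (m + 1) → ℕ) :
    (∀ a b, (pathCut m n).Adj a b → κ a ≠ κ b) ↔
      ∀ a b : Fin (m + 1), (a : ℕ) + 1 = (b : ℕ) → (b : ℕ) ≠ n → κ a ≠ κ b := by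
  rw [pathCut, proper_fromRel_iff (fun a b h => Fin.ne_of_val_ne (by omega))]
  constructor
  · intro h a b h1 h2; exact h a b ⟨h1, h2⟩
  · rintro h a b ⟨h1, h2⟩; exact h a b h1 h2

lemma proper_iso_iff (κ : Fin (m + 1) → ℕ) :
    (∀ a b, (pathIso m).Adj a b → κ a ≠ κ b) ↔
      ∀ a b : Fin (m + 1), (a : ℕ) + 1 = (b : ℕ) → (b : ℕ) < m → κ a ≠ κ b := by
  rw [pathIso, proper_fromRel_iff (fun a b h => Fin.ne_of_val_ne (by omega))]
  constructor
  · intro h a b h1 h2; exact h a b ⟨h1, h2⟩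
  · rintro h a b ⟨h1, h2⟩; exact h a b h1 h2

lemma proper_leaf_iff (hn : 1 ≤ n) (hnm : n ≤ m) (κ : Fin (m + 1) → ℕ) :
    (∀ a b, (pathLeaf m n).Adj a b → κ a ≠ κ b) ↔
      ∀ a b : Fin (m + 1),
        (((a : ℕ) + 1 = (b : ℕ) ∧ (b : ℕ) < m) ∨ ((a : ℕ) = n - 1 ∧ (b : ℕ) = m)) →
          κ a ≠ κ b := by
  rw [pathLeaf, proper_fromRel_iff
    (fun a b h => Fin.ne_of_val_ne (by rcases h with ⟨h1, h2⟩ | ⟨h1, h2⟩ <;> omega))]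

section Transfer

variable {m n : ℕ} (hn : 1 ≤ n) (hnm : n ≤ m) (κ : Fin (m + 1) → ℕ)
include hn hnm

lemma L_path_cut (h : ∀ a b, (path (m + 1)).Adj a b → κ a ≠ κ b) :
    ∀ a b, (pathCut m n).Adj a b → κ a ≠ κ b := by
  rw [proper_cut_iff]
  rw [proper_path_iff] at h
  intro a b h1 _
  exact h a b h1

lemma L_path_ne (h : ∀ a b, (path (m + 1)).Adj a b → κ a ≠ κ b) :
    κ ⟨n - 1, by omega⟩ ≠ κ ⟨n, by omega⟩ := by
  rw [proper_path_iff] at h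
  exact h _ _ (by simp; omega)

lemma L_cut_path (h : ∀ a b, (pathCut m n).Adj a b → κ a ≠ κ b)
    (hne : κ ⟨n - 1, by omega⟩ ≠ κ ⟨n, by omega⟩) :
    ∀ a b, (path (m + 1)).Adj a b → κ a ≠ κ b := by
  rw [proper_path_iff]
  rw [proper_cut_iff] at h
  intro a b h1
  rcases eq_or_ne (b : ℕ) n with hb | hb
  · have ha : a = ⟨n - 1, by omega⟩ := Fin.ext (by simp; omega)
    have hb' : b = ⟨n, by omega⟩ := Fin.ext (by simp; omega)
    simp only [ha, hb']
    exact hne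
  · exact h a b h1 hb

lemma L_leaf_iso (h : ∀ a b, (pathLeaf m n).Adj a b → κ a ≠ κ b) :
    ∀ a b, (pathIso m).Adj a b → κ a ≠ κ b := by
  rw [proper_iso_iff]
  rw [proper_leaf_iff _ _ hn hnm] at h
  intro a b h1 h2
  exact h a b (Or.inl ⟨h1, h2⟩)

lemma L_leaf_ne (h : ∀ a b, (pathLeaf m n).Adj a b → κ a ≠ κ b) :
    κ ⟨m, by omega⟩ ≠ κ ⟨n - 1, by omega⟩ := by
  rw [proper_leaf_iff _ _ hn hnm] at h
  exact (h _ _ (Or.inr ⟨rfl, rfl⟩)).symm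

lemma L_iso_leaf (h : ∀ a b, (pathIso m).Adj a b → κ a ≠ κ b)
    (hne : κ ⟨m, by omega⟩ ≠ κ ⟨n - 1, by omega⟩) :
    ∀ a b, (pathLeaf m n).Adj a b → κ a ≠ κ b := by
  rw [proper_leaf_iff _ _ hn hnm]
  rw [proper_iso_iff] at h
  rintro a b (⟨h1, h2⟩ | ⟨h1, h2⟩)
  · exact h a b h1 h2
  · have ha : a = ⟨n - 1, by omega⟩ := Fin.ext (by simpa using h1)
    have hb : b = ⟨m, by omega⟩ := Fin.ext (by simpa using h2)
    simp only [ha, hb]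
    exact hne.symm

lemma L_cut_iso (h : ∀ a b, (pathCut m n).Adj a b → κ a ≠ κ b)
    (he : κ ⟨n - 1, by omega⟩ = κ ⟨n, by omega⟩) :
    ∀ a b, (pathIso m).Adj a b → (κ ∘ σperm m n hnm) a ≠ (κ ∘ σperm m n hnm) b := by
  rw [proper_iso_iff]
  rw [proper_cut_iff] at h
  intro a b h1 hbm
  show κ (σperm m n hnm a) ≠ κ (σperm m n hnm b)
  rcases eq_or_ne (b : ℕ) n with hbn | hbn
  · have ha : σperm m n hnm a = ⟨n - 1, by omega⟩ :=
      Fin.ext (by rw [σperm_val]; simp; split_ifs <;> omega)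
    rw [ha, he]
    apply h
    · rw [σperm_val]; simp; split_ifs <;> omega
    · rw [σperm_val]; split_ifs <;> omega
  · apply h
    · rw [σperm_val, σperm_val]; split_ifs <;> omega
    · rw [σperm_val]; split_ifs <;> omega

lemma L_iso_cut (h : ∀ a b, (pathIso m).Adj a b → κ a ≠ κ b)
    (he : κ ⟨m, by omega⟩ = κ ⟨n - 1, by omega⟩) :
    ∀ a b, (pathCut m n).Adj a b → (κ ∘ (σperm m n hnm).symm) a ≠ (κ ∘ (σperm m n hnm).symm) b := by
  rw [proper_cut_iff]
  rw [proper_iso_iff] at h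
  intro a b h1 hbn
  show κ ((σperm m n hnm).symm a) ≠ κ ((σperm m n hnm).symm b)
  rcases eq_or_ne (a : ℕ) n with han | han
  · have ha : (σperm m n hnm).symm a = ⟨m, by omega⟩ :=
      Fin.ext (by show _ = m; rw [σperm_symm_val]; (try simp only [Fin.val_mk]); split_ifs <;> omega)
    have hb : (σperm m n hnm).symm b = ⟨n, by omega⟩ :=
      Fin.ext (by show _ = n; rw [σperm_symm_val]; have := b.2; split_ifs <;> omega)
    rw [ha, hb, he]
    apply h
    · show n - 1 + 1 = n; omega
    · show n < m; have := b.2; omega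
  · apply h
    · rw [σperm_symm_val, σperm_symm_val]; split_ifs <;> omega
    · rw [σperm_symm_val]; have := b.2; split_ifs <;> omega

end Transfer

section KeyCount

variable {m n : ℕ}

lemma sig_M_eq (hn : 1 ≤ n) (hnm : n ≤ m) :
    σperm m n hnm ⟨m, by omega⟩ = (⟨n, by omega⟩ : Fin (m + 1)) :=
  Fin.ext (by show _ = n; rw [σperm_val]; (try simp only [Fin.val_mk]); split_ifs <;> omega)

lemma sig_N1_eq (hn : 1 ≤ n) (hnm : n ≤ m) :
    σperm m n hnm ⟨n - 1, by omega⟩ = (⟨n - 1, by omega⟩ : Fin (m + 1)) :=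
  Fin.ext (by show _ = n - 1; rw [σperm_val]; (try simp only [Fin.val_mk]); split_ifs <;> omega)

lemma sig_symm_N1_eq (hn : 1 ≤ n) (hnm : n ≤ m) :
    (σperm m n hnm).symm ⟨n - 1, by omega⟩ = (⟨n - 1, by omega⟩ : Fin (m + 1)) :=
  Fin.ext (by show _ = n - 1; rw [σperm_symm_val]; (try simp only [Fin.val_mk]); split_ifs <;> omega)

lemma sig_symm_N_eq (hn : 1 ≤ n) (hnm : n ≤ m) :
    (σperm m n hnm).symm ⟨n, by omega⟩ = (⟨m, by omega⟩ : Fin (m + 1)) :=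
  Fin.ext (by show _ = m; rw [σperm_symm_val]; (try simp only [Fin.val_mk]); split_ifs <;> omega)

lemma key_count (hn : 1 ≤ n) (hnm : n ≤ m) (d : ℕ →₀ ℕ) :
    Nat.card (Col (pathLeaf m n) d) + Nat.card (Col (pathCut m n) d)
      = Nat.card (Col (path (m + 1)) d) + Nat.card (Col (pathIso m) d) := by
  classical
  rw [← Nat.card_sum, ← Nat.card_sum]
  refine Nat.card_congr
    { toFun := Sum.elim
        (fun κ => Sum.inr ⟨κ.1, L_leaf_iso hn hnm κ.1 κ.2.1, κ.2.2⟩)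
        (fun κ => if h : κ.1 ⟨n - 1, by omega⟩ = κ.1 ⟨n, by omega⟩ then
            Sum.inr ⟨κ.1 ∘ σperm m n hnm, L_cut_iso hn hnm κ.1 κ.2.1 h,
              (fib_comp_equiv (σperm m n hnm) κ.1).trans κ.2.2⟩
          else Sum.inl ⟨κ.1, L_cut_path hn hnm κ.1 κ.2.1 h, κ.2.2⟩),
      invFun := Sum.elim
        (fun κ => Sum.inr ⟨κ.1, L_path_cut hn hnm κ.1 κ.2.1, κ.2.2⟩)
        (fun κ => if h : κ.1 ⟨m, by omega⟩ = κ.1 ⟨n - 1, by omega⟩ then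
            Sum.inr ⟨κ.1 ∘ (σperm m n hnm).symm, L_iso_cut hn hnm κ.1 κ.2.1 h,
              (fib_comp_equiv (σperm m n hnm).symm κ.1).trans κ.2.2⟩
          else Sum.inl ⟨κ.1, L_iso_leaf hn hnm κ.1 κ.2.1 h, κ.2.2⟩),
      left_inv := ?_, right_inv := ?_ }
  · rintro (κ | κ)
    · simp only [Sum.elim_inl, Sum.elim_inr]
      rw [dif_neg (L_leaf_ne hn hnm κ.1 κ.2.1)]
    · by_cases h : κ.1 ⟨n - 1, by omega⟩ = κ.1 ⟨n, by omega⟩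
      · simp only [Sum.elim_inr]
        rw [dif_pos h]
        simp only [Sum.elim_inr]
        have hcond : (κ.1 ∘ σperm m n hnm) ⟨m, by omega⟩
            = (κ.1 ∘ σperm m n hnm) ⟨n - 1, by omega⟩ := by
          show κ.1 (σperm m n hnm ⟨m, by omega⟩) = κ.1 (σperm m n hnm ⟨n - 1, by omega⟩)
          rw [sig_M_eq hn hnm, sig_N1_eq hn hnm]
          exact h.symm
        rw [dif_pos hcond]
        apply congrArg Sum.inr
        apply Subtype.ext
        funext v
        show κ.1 (σperm m n hnm ((σperm m n hnm).symm v)) = κ.1 v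
        rw [Equiv.apply_symm_apply]
      · simp only [Sum.elim_inr]
        rw [dif_neg h]
        simp only [Sum.elim_inl]
  · rintro (κ | κ)
    · simp only [Sum.elim_inl, Sum.elim_inr]
      rw [dif_neg (L_path_ne hn hnm κ.1 κ.2.1)]
    · by_cases h : κ.1 ⟨m, by omega⟩ = κ.1 ⟨n - 1, by omega⟩
      · simp only [Sum.elim_inr]
        rw [dif_pos h]
        simp only [Sum.elim_inr]
        have hcond : (κ.1 ∘ (σperm m n hnm).symm) ⟨n - 1, by omega⟩
            = (κ.1 ∘ (σperm m n hnm).symm) ⟨n, by omega⟩ := by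
          show κ.1 ((σperm m n hnm).symm ⟨n - 1, by omega⟩)
            = κ.1 ((σperm m n hnm).symm ⟨n, by omega⟩)
          rw [sig_symm_N1_eq hn hnm, sig_symm_N_eq hn hnm]
          exact h.symm
        rw [dif_pos hcond]
        apply congrArg Sum.inr
        apply Subtype.ext
        funext v
        show κ.1 ((σperm m n hnm).symm (σperm m n hnm v)) = κ.1 v
        rw [Equiv.symm_apply_apply]
      · simp only [Sum.elim_inr]
        rw [dif_neg h]
        simp only [Sum.elim_inl]

end KeyCount

end Key

section Assemble

lemma sumGraph_adj_ll {V W : Type} {G : SimpleGraph V} {H : SimpleGraph W} {a b : V} :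
    (sumGraph G H).Adj (Sum.inl a) (Sum.inl b) ↔ G.Adj a b := Iff.rfl

lemma sumGraph_adj_rr {V W : Type} {G : SimpleGraph V} {H : SimpleGraph W} {a b : W} :
    (sumGraph G H).Adj (Sum.inr a) (Sum.inr b) ↔ H.Adj a b := Iff.rfl

lemma sumGraph_adj_lr {V W : Type} {G : SimpleGraph V} {H : SimpleGraph W} {a : V} {b : W} :
    (sumGraph G H).Adj (Sum.inl a) (Sum.inr b) ↔ False := Iff.rfl

lemma sumGraph_adj_rl {V W : Type} {G : SimpleGraph V} {H : SimpleGraph W} {a : W} {b : V} :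
    (sumGraph G H).Adj (Sum.inr a) (Sum.inl b) ↔ False := Iff.rfl

lemma esym_mul_csf_path (m : ℕ) : esym 1 * csf (path m) = csf (pathIso m) := by
  rw [esym_one, mul_comm, ← csf_sumGraph]
  refine csf_congr (finSumFinEquiv : Fin m ⊕ Fin 1 ≃ Fin (m + 1)) ?_
  rintro (a | a) (b | b)
  · rw [sumGraph_adj_ll]
    simp only [path, pathIso, SimpleGraph.fromRel_adj, finSumFinEquiv_apply_left,
      Fin.coe_castAdd, ne_eq, Fin.ext_iff]
    omega
  · rw [sumGraph_adj_lr, false_iff]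
    simp only [pathIso, SimpleGraph.fromRel_adj, finSumFinEquiv_apply_left,
      finSumFinEquiv_apply_right, Fin.coe_castAdd, Fin.coe_natAdd, ne_eq, Fin.ext_iff]
    omega
  · rw [sumGraph_adj_rl, false_iff]
    simp only [pathIso, SimpleGraph.fromRel_adj, finSumFinEquiv_apply_left,
      finSumFinEquiv_apply_right, Fin.coe_castAdd, Fin.coe_natAdd, ne_eq, Fin.ext_iff]
    omega
  · rw [sumGraph_adj_rr, SimpleGraph.bot_adj, false_iff]
    simp only [pathIso, SimpleGraph.fromRel_adj,
      finSumFinEquiv_apply_right, Fin.coe_natAdd, ne_eq, Fin.ext_iff]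
    omega

lemma csf_path_mul (m n : ℕ) (hn : 1 ≤ n) (hnm : n ≤ m) :
    csf (path n) * csf (path (m - n + 1)) = csf (pathCut m n) := by
  rw [← csf_sumGraph]
  have hh : n + (m - n + 1) = m + 1 := by omega
  refine csf_congr ((finSumFinEquiv : Fin n ⊕ Fin (m - n + 1) ≃ Fin (n + (m - n + 1))).trans
    (finCongr hh)) ?_
  rintro (a | a) (b | b)
  · rw [sumGraph_adj_ll]
    simp only [path, pathCut, SimpleGraph.fromRel_adj, Equiv.trans_apply,
      finSumFinEquiv_apply_left, finCongr_apply, Fin.coe_cast, Fin.coe_castAdd, ne_eq,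
      Fin.ext_iff]
    omega
  · rw [sumGraph_adj_lr, false_iff]
    simp only [path, pathCut, SimpleGraph.fromRel_adj, Equiv.trans_apply,
      finSumFinEquiv_apply_left, finSumFinEquiv_apply_right, finCongr_apply, Fin.coe_cast,
      Fin.coe_castAdd, Fin.coe_natAdd, ne_eq, Fin.ext_iff]
    omega
  · rw [sumGraph_adj_rl, false_iff]
    simp only [path, pathCut, SimpleGraph.fromRel_adj, Equiv.trans_apply,
      finSumFinEquiv_apply_left, finSumFinEquiv_apply_right, finCongr_apply, Fin.coe_cast,
      Fin.coe_castAdd, Fin.coe_natAdd, ne_eq, Fin.ext_iff]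
    omega
  · rw [sumGraph_adj_rr]
    simp only [path, pathCut, SimpleGraph.fromRel_adj, Equiv.trans_apply,
      finSumFinEquiv_apply_right, finCongr_apply, Fin.coe_cast, Fin.coe_natAdd, ne_eq,
      Fin.ext_iff]
    omega

end Assemble

/-- For all `m ≥ n ≥ 1`,
`X_{P_{m,n}} = X_{P_{m+1}} + e_1 · X_{P_m} − X_{P_n} · X_{P_{m−n+1}}`. -/
theorem csf_pathLeaf_eq (m n : ℕ) (hn : 1 ≤ n) (hnm : n ≤ m) :
    csf (pathLeaf m n) =
      csf (path (m + 1)) + esym 1 * csf (path m) - csf (path n) * csf (path (m - n + 1)) := by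
  rw [esym_mul_csf_path, csf_path_mul m n hn hnm, eq_sub_iff_add_eq]
  ext d
  rw [map_add, map_add, MvPowerSeries.coeff_apply, MvPowerSeries.coeff_apply,
    MvPowerSeries.coeff_apply, MvPowerSeries.coeff_apply, csf_apply, csf_apply, csf_apply,
    csf_apply]
  exact_mod_cast key_count hn hnm d
end

section
/- For all integers a ≥ 3 and b ≥ 1, X_{T^{a,b}} = (a−1) X_{P_{a+b}} − Σ_{i=2}^{a−1} X_{C_i} · X_{P_{a+b−i}}, where C_2 denotes K_2 with X_{C_2} = 2e_2. -/
open scoped BigOperators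

/-- series of colorings satisfying predicate `P` with fibers `d`. -/
noncomputable def cser {V : Type} [Fintype V] (P : (V → ℕ) → Prop) : MvPowerSeries ℕ ℚ :=
  fun d => (Nat.card {κ : V → ℕ // P κ ∧ ∀ i : ℕ, Nat.card {v : V // κ v = i} = d i} : ℚ)

lemma csf_eq_cser {V : Type} [Fintype V] (G : SimpleGraph V) :
    csf G = cser (fun κ => ∀ a b : V, G.Adj a b → κ a ≠ κ b) := rfl

/-- splitting a subtype over a disjoint disjunction. -/
noncomputable def subtypeOrSplit {α : Type*} {A B F : α → Prop} (hd : ∀ a, ¬ (A a ∧ B a)) :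
    {a : α // (A a ∨ B a) ∧ F a} ≃ {a : α // A a ∧ F a} ⊕ {a : α // B a ∧ F a} := by
  classical
  refine ⟨fun x => if h : A x.1 then Sum.inl ⟨x.1, h, x.2.2⟩ else
      Sum.inr ⟨x.1, x.2.1.resolve_left h, x.2.2⟩,
    Sum.elim (fun y => ⟨y.1, Or.inl y.2.1, y.2.2⟩) (fun y => ⟨y.1, Or.inr y.2.1, y.2.2⟩),
    ?_, ?_⟩
  · intro x
    dsimp only
    by_cases h : A x.1
    · rw [dif_pos h]; rfl
    · rw [dif_neg h]; rfl
  · rintro (y | y)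
    · exact dif_pos y.2.1
    · exact dif_neg (fun h => hd y.1 ⟨h, y.2.1⟩)

lemma colorings_finite {V : Type} [Fintype V] (P : (V → ℕ) → Prop) (d : ℕ →₀ ℕ) :
    Finite {κ : V → ℕ // P κ ∧ ∀ i : ℕ, Nat.card {v : V // κ v = i} = d i} := by
  classical
  have key : ∀ (κ : V → ℕ), (∀ i : ℕ, Nat.card {v : V // κ v = i} = d i) →
      ∀ v : V, κ v ∈ d.support := by
    intro κ h v
    have h1 : Nat.card {w : V // κ w = κ v} ≠ 0 := by
      have : Nonempty {w : V // κ w = κ v} := ⟨⟨v, rfl⟩⟩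
      simp only [Nat.card_eq_fintype_card]
      exact Fintype.card_ne_zero
    rw [Finsupp.mem_support_iff]
    rw [h (κ v)] at h1
    exact h1
  apply Finite.of_injective
    (fun x : {κ : V → ℕ // P κ ∧ ∀ i : ℕ, Nat.card {v : V // κ v = i} = d i} =>
      (fun v => (⟨x.1 v, key x.1 x.2.2 v⟩ : {i // i ∈ d.support}) : V → {i // i ∈ d.support}))
  intro x y hxy
  ext v
  exact congrArg Subtype.val (congrFun hxy v)

lemma cser_congr {V : Type} [Fintype V] {P Q : (V → ℕ) → Prop} (h : ∀ κ, P κ ↔ Q κ) :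
    cser P = cser Q := by
  funext d
  simp only [cser]
  norm_cast
  exact Nat.card_congr (Equiv.subtypeEquivRight (by intro κ; rw [h κ]))

lemma cser_zero {V : Type} [Fintype V] {P : (V → ℕ) → Prop} (h : ∀ κ, ¬ P κ) :
    cser P = 0 := by
  funext d
  have he : IsEmpty {κ : V → ℕ // P κ ∧ ∀ i : ℕ, Nat.card {v : V // κ v = i} = d i} :=
    ⟨fun x => h x.1 x.2.1⟩
  show (Nat.card _ : ℚ) = 0
  rw [Nat.card_of_isEmpty]
  exact Nat.cast_zero

lemma cser_split {V : Type} [Fintype V] {P Q R : (V → ℕ) → Prop}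
    (h : ∀ κ, P κ ↔ (Q κ ∨ R κ)) (hd : ∀ κ, ¬ (Q κ ∧ R κ)) :
    cser P = cser Q + cser R := by
  classical
  funext d
  have fQ := colorings_finite Q d
  have fR := colorings_finite R d
  show (Nat.card _ : ℚ) = (Nat.card _ : ℚ) + (Nat.card _ : ℚ)
  rw [← Nat.cast_add, ← Nat.card_sum]
  norm_cast
  apply Nat.card_congr
  exact (Equiv.subtypeEquivRight (fun κ => by rw [h κ])).trans (subtypeOrSplit hd)

/-- relabeling vertices -/
lemma cser_reindex {V W : Type} [Fintype V] [Fintype W] (e : V ≃ W) (P : (V → ℕ) → Prop) :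
    cser P = cser (fun κ : W → ℕ => P (κ ∘ e)) := by
  funext d
  simp only [cser]
  norm_cast
  apply Nat.card_congr
  refine ⟨fun x => ⟨x.1 ∘ e.symm, ?_, ?_⟩, fun y => ⟨y.1 ∘ e, ?_, ?_⟩, ?_, ?_⟩
  · have : (x.1 ∘ e.symm) ∘ e = x.1 := by ext v; simp
    rw [this]; exact x.2.1
  · intro i
    rw [← x.2.2 i]
    exact Nat.card_congr (Equiv.subtypeEquiv e.symm (fun w => Iff.rfl))
  · exact y.2.1
  · intro i
    rw [← y.2.2 i]
    exact Nat.card_congr (Equiv.subtypeEquiv e (fun v => Iff.rfl))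
  · intro x; ext v; simp
  · intro y; ext v; simp


noncomputable def fibs {V : Type} [Fintype V] (κ : V → ℕ) : ℕ →₀ ℕ :=
  Finsupp.onFinset (Finset.image κ Finset.univ) (fun i => Nat.card {v : V // κ v = i})
    (by
      intro i hi
      by_contra hmem
      apply hi
      have : IsEmpty {v : V // κ v = i} :=
        ⟨fun x => hmem (Finset.mem_image.2 ⟨x.1, Finset.mem_univ _, x.2⟩)⟩
      exact Nat.card_of_isEmpty)

lemma fibs_apply {V : Type} [Fintype V] (κ : V → ℕ) (i : ℕ) :
    fibs κ i = Nat.card {v : V // κ v = i} := rfl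

lemma fibc_iff {V : Type} [Fintype V] (κ : V → ℕ) (d : ℕ →₀ ℕ) :
    (∀ i : ℕ, Nat.card {v : V // κ v = i} = d i) ↔ fibs κ = d := by
  constructor
  · intro h; ext i; rw [fibs_apply]; exact h i
  · intro h i; rw [← h]; rfl

lemma card_subtype_sum {V W : Type} [Fintype V] [Fintype W] (κ : V ⊕ W → ℕ) (i : ℕ) :
    Nat.card {x : V ⊕ W // κ x = i} =
      Nat.card {v : V // κ (Sum.inl v) = i} + Nat.card {w : W // κ (Sum.inr w) = i} := by
  rw [← Nat.card_sum]
  exact Nat.card_congr Equiv.subtypeSum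

lemma fibs_sum_decomp {V W : Type} [Fintype V] [Fintype W] (κ : V ⊕ W → ℕ) :
    fibs κ = fibs (κ ∘ Sum.inl) + fibs (κ ∘ Sum.inr) := by
  ext i
  rw [Finsupp.add_apply, fibs_apply, fibs_apply, fibs_apply]
  exact card_subtype_sum κ i

lemma card_fiberwise {α ι : Type*} [Finite α] (s : Finset ι) (f : α → ι)
    (hf : ∀ a, f a ∈ s) : Nat.card α = ∑ i ∈ s, Nat.card {a : α // f a = i} := by
  classical
  cases nonempty_fintype α
  calc Nat.card α = Nat.card ((i : {x // x ∈ s}) × {a : α // f a = i.1}) := by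
        refine (Nat.card_congr ?_).symm
        refine (Equiv.sigmaCongrRight (fun i => ?_)).trans
          (Equiv.sigmaFiberEquiv (fun a : α => (⟨f a, hf a⟩ : {x // x ∈ s})))
        exact Equiv.subtypeEquivRight (fun a => by rw [Subtype.ext_iff])
    _ = ∑ i : {x // x ∈ s}, Nat.card {a : α // f a = i.1} := by
        simp [Nat.card_eq_fintype_card, Fintype.card_sigma]
    _ = ∑ i ∈ s, Nat.card {a : α // f a = i} :=
        Finset.sum_coe_sort s (fun i => Nat.card {a : α // f a = i})

lemma cser_mul {V W : Type} [Fintype V] [Fintype W] (P : (V → ℕ) → Prop)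
    (Q : (W → ℕ) → Prop) :
    cser (fun κ : V ⊕ W → ℕ => P (κ ∘ Sum.inl) ∧ Q (κ ∘ Sum.inr)) = cser P * cser Q := by
  classical
  funext d
  have hmul : (cser P * cser Q) d
      = ∑ p ∈ Finset.HasAntidiagonal.antidiagonal d, (cser P p.1) * (cser Q p.2) := by
    simpa [MvPowerSeries.coeff_apply] using
      MvPowerSeries.coeff_mul (R := ℚ) d (cser P) (cser Q)
  rw [hmul]
  show (Nat.card _ : ℚ) = _
  have hfin := colorings_finite (V := V ⊕ W)
    (fun κ : V ⊕ W → ℕ => P (κ ∘ Sum.inl) ∧ Q (κ ∘ Sum.inr)) d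
  set A := {κ : V ⊕ W → ℕ // (P (κ ∘ Sum.inl) ∧ Q (κ ∘ Sum.inr)) ∧
      ∀ i : ℕ, Nat.card {v : V ⊕ W // κ v = i} = d i} with hA
  have hcard : Nat.card A = ∑ p ∈ Finset.HasAntidiagonal.antidiagonal d,
      Nat.card {x : A // (fibs (x.1 ∘ Sum.inl), fibs (x.1 ∘ Sum.inr)) = p} := by
    apply card_fiberwise
    intro x
    rw [Finset.HasAntidiagonal.mem_antidiagonal, ← fibs_sum_decomp]
    exact (fibc_iff _ d).1 x.2.2
  have hprod : ∀ p : (ℕ →₀ ℕ) × (ℕ →₀ ℕ), p ∈ Finset.HasAntidiagonal.antidiagonal d →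
      Nat.card {x : A // (fibs (x.1 ∘ Sum.inl), fibs (x.1 ∘ Sum.inr)) = p} =
      Nat.card {κ1 : V → ℕ // P κ1 ∧ ∀ i : ℕ, Nat.card {v : V // κ1 v = i} = p.1 i} *
      Nat.card {κ2 : W → ℕ // Q κ2 ∧ ∀ i : ℕ, Nat.card {w : W // κ2 w = i} = p.2 i} := by
    intro p hp
    rw [Finset.HasAntidiagonal.mem_antidiagonal] at hp
    rw [← Nat.card_prod]
    apply Nat.card_congr
    refine ⟨fun x => (⟨x.1.1 ∘ Sum.inl, x.1.2.1.1,
        fun i => (fibc_iff _ _).2 (congrArg Prod.fst x.2) i⟩,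
        ⟨x.1.1 ∘ Sum.inr, x.1.2.1.2,
        fun i => (fibc_iff _ _).2 (congrArg Prod.snd x.2) i⟩),
      fun y => ⟨⟨Sum.elim y.1.1 y.2.1, ⟨?_, ?_⟩, ?_⟩, ?_⟩, ?_, ?_⟩
    · show P (Sum.elim y.1.1 y.2.1 ∘ Sum.inl)
      have h : Sum.elim y.1.1 y.2.1 ∘ Sum.inl = y.1.1 := rfl
      rw [h]; exact y.1.2.1
    · show Q (Sum.elim y.1.1 y.2.1 ∘ Sum.inr)
      have h : Sum.elim y.1.1 y.2.1 ∘ Sum.inr = y.2.1 := rfl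
      rw [h]; exact y.2.2.1
    · intro i
      rw [card_subtype_sum]
      have h1 : Nat.card {v : V // Sum.elim y.1.1 y.2.1 (Sum.inl v) = i} = p.1 i := y.1.2.2 i
      have h2 : Nat.card {w : W // Sum.elim y.1.1 y.2.1 (Sum.inr w) = i} = p.2 i := y.2.2.2 i
      rw [h1, h2, ← Finsupp.add_apply, hp]
    · rw [Prod.ext_iff]
      constructor
      · show fibs (Sum.elim y.1.1 y.2.1 ∘ Sum.inl) = p.1
        have h : Sum.elim y.1.1 y.2.1 ∘ Sum.inl = y.1.1 := rfl
        rw [h]; exact (fibc_iff _ _).1 y.1.2.2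
      · show fibs (Sum.elim y.1.1 y.2.1 ∘ Sum.inr) = p.2
        have h : Sum.elim y.1.1 y.2.1 ∘ Sum.inr = y.2.1 := rfl
        rw [h]; exact (fibc_iff _ _).1 y.2.2.2
    · intro x
      apply Subtype.ext
      apply Subtype.ext
      funext z
      cases z <;> rfl
    · intro y
      rw [Prod.ext_iff]
      exact ⟨Subtype.ext rfl, Subtype.ext rfl⟩
  rw [hcard]
  push_cast
  apply Finset.sum_congr rfl
  intro p hp
  rw [hprod p hp]
  push_cast
  rfl

/-- all consecutive edges -/
def pp (n : ℕ) (κ : Fin n → ℕ) : Prop :=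
  ∀ i j : Fin n, (i : ℕ) + 1 = (j : ℕ) → κ i ≠ κ j

/-- all consecutive edges except the one landing at `c` -/
def pe (n c : ℕ) (κ : Fin n → ℕ) : Prop :=
  ∀ i j : Fin n, (i : ℕ) + 1 = (j : ℕ) → (j : ℕ) ≠ c → κ i ≠ κ j

/-- the colors at positions `u` and `w` agree -/
def eqv (n u w : ℕ) (κ : Fin n → ℕ) : Prop :=
  ∀ i j : Fin n, (i : ℕ) = u → (j : ℕ) = w → κ i = κ j

/-- the colors at positions `u` and `w` differ -/
def nev (n u w : ℕ) (κ : Fin n → ℕ) : Prop :=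
  ∀ i j : Fin n, (i : ℕ) = u → (j : ℕ) = w → κ i ≠ κ j

lemma proper_fromRel_iff_s17 {V : Type} (r : V → V → Prop) (κ : V → ℕ) :
    (∀ x y, (SimpleGraph.fromRel r).Adj x y → κ x ≠ κ y) ↔
      (∀ x y, r x y → x ≠ y → κ x ≠ κ y) := by
  constructor
  · intro h x y hr hne
    exact h x y ((SimpleGraph.fromRel_adj r x y).2 ⟨hne, Or.inl hr⟩)
  · intro h x y hadj
    rcases (SimpleGraph.fromRel_adj r x y).1 hadj with ⟨hne, hr | hr⟩
    · exact h x y hr hne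
    · exact fun he => (h y x hr hne.symm) he.symm

lemma path_proper_iff (n : ℕ) (κ : Fin n → ℕ) :
    (∀ x y, (path n).Adj x y → κ x ≠ κ y) ↔ pp n κ := by
  rw [path, proper_fromRel_iff_s17]
  constructor
  · intro h i j hij
    exact h i j hij (Fin.ne_of_val_ne (by omega))
  · intro h i j hij _
    exact h i j hij

lemma tadpole_proper_iff (a b : ℕ) (ha : 3 ≤ a) (κ : Fin (a + b) → ℕ) :
    (∀ x y, (tadpole a b).Adj x y → κ x ≠ κ y) ↔
      pp (a + b) κ ∧ nev (a + b) 0 (a - 1) κ := by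
  rw [tadpole, proper_fromRel_iff_s17]
  constructor
  · intro h
    constructor
    · intro i j hij
      exact h i j (Or.inl hij) (Fin.ne_of_val_ne (by omega))
    · intro i j hi hj
      exact h i j (Or.inr ⟨hi, hj⟩) (Fin.ne_of_val_ne (by omega))
  · rintro ⟨h1, h2⟩ i j (hij | ⟨hi, hj⟩) _
    · exact h1 i j hij
    · exact h2 i j hi hj

lemma cycle_proper_iff (c : ℕ) (hc : 2 ≤ c) (κ : Fin c → ℕ) :
    (∀ x y, (cycle c).Adj x y → κ x ≠ κ y) ↔
      pp c κ ∧ nev c (c - 1) 0 κ := by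
  rw [cycle, proper_fromRel_iff_s17]
  constructor
  · intro h
    constructor
    · intro i j hij
      have hj : (j : ℕ) < c := j.isLt
      refine h i j ?_ (Fin.ne_of_val_ne (by omega))
      rw [← hij]
      exact Nat.mod_eq_of_lt (by omega)
    · intro i j hi hj
      refine h i j ?_ (Fin.ne_of_val_ne (by omega))
      rw [hi, hj]
      have hc1 : c - 1 + 1 = c := by omega
      rw [hc1, Nat.mod_self]
  · rintro ⟨h1, h2⟩ i j hij _
    have hi : (i : ℕ) < c := i.isLt
    by_cases hlast : (i : ℕ) + 1 = c
    · have hj0 : (j : ℕ) = 0 := by rw [← hij, hlast, Nat.mod_self]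
      exact h2 i j (by omega) hj0
    · have : (i : ℕ) + 1 = (j : ℕ) := by rw [← hij]; exact (Nat.mod_eq_of_lt (by omega)).symm
      exact h1 i j this

/-! ## The product identity -/

def cpEquiv (n c : ℕ) (h : c ≤ n) : Fin c ⊕ Fin (n - c) ≃ Fin n :=
  finSumFinEquiv.trans (finCongr (by omega))

lemma cpEquiv_inl_val (n c : ℕ) (h : c ≤ n) (i : Fin c) :
    ((cpEquiv n c h (Sum.inl i)) : ℕ) = (i : ℕ) := by
  simp [cpEquiv]

lemma cpEquiv_inr_val (n c : ℕ) (h : c ≤ n) (k : Fin (n - c)) :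
    ((cpEquiv n c h (Sum.inr k)) : ℕ) = c + (k : ℕ) := by
  simp [cpEquiv]

lemma csf_cycle_mul_path (n c : ℕ) (hc : 2 ≤ c) (hcn : c ≤ n) :
    csf (cycle c) * csf (path (n - c)) =
      cser (fun κ : Fin n → ℕ => pe n c κ ∧ nev n 0 (c - 1) κ) := by
  set e := cpEquiv n c hcn with he
  have hval1 := cpEquiv_inl_val n c hcn
  have hval2 := cpEquiv_inr_val n c hcn
  rw [csf_eq_cser, csf_eq_cser,
    cser_congr (fun κ => cycle_proper_iff c hc κ),
    cser_congr (fun κ => path_proper_iff (n - c) κ),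
    ← cser_mul, cser_reindex e]
  apply cser_congr
  intro κ
  constructor
  · rintro ⟨⟨hcyc, hclose⟩, htail⟩
    constructor
    · -- pe
      intro i j hij hjc
      by_cases hjlt : (j : ℕ) < c
      · have hilt : (i : ℕ) < c := by omega
        have h := hcyc ⟨(i : ℕ), hilt⟩ ⟨(j : ℕ), hjlt⟩ (by simpa using hij)
        have e1 : e (Sum.inl ⟨(i : ℕ), hilt⟩) = i := Fin.ext (by rw [hval1])
        have e2 : e (Sum.inl ⟨(j : ℕ), hjlt⟩) = j := Fin.ext (by rw [hval1])
        rw [Function.comp_apply, Function.comp_apply, Function.comp_apply,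
          Function.comp_apply, e1, e2] at h
        exact h
      · -- tail edge
        have hige : c ≤ (i : ℕ) := by omega
        have hjn : (j : ℕ) < n := j.isLt
        have hi' : (i : ℕ) - c < n - c := by omega
        have hj' : (j : ℕ) - c < n - c := by omega
        have h := htail ⟨(i : ℕ) - c, hi'⟩ ⟨(j : ℕ) - c, hj'⟩ (by simp; omega)
        have e1 : e (Sum.inr ⟨(i : ℕ) - c, hi'⟩) = i := Fin.ext (by rw [hval2]; show c + ((i : ℕ) - c) = i; omega)
        have e2 : e (Sum.inr ⟨(j : ℕ) - c, hj'⟩) = j := Fin.ext (by rw [hval2]; show c + ((j : ℕ) - c) = j; omega)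
        rw [Function.comp_apply, Function.comp_apply, Function.comp_apply,
          Function.comp_apply, e1, e2] at h
        exact h
    · -- nev 0 (c-1)
      intro i j hi hj
      have hc1 : c - 1 < c := by omega
      have h0 : 0 < c := by omega
      have h := hclose ⟨c - 1, hc1⟩ ⟨0, h0⟩ (by simp) (by simp)
      have e1 : e (Sum.inl ⟨c - 1, hc1⟩) = j := Fin.ext (by rw [hval1, hj])
      have e2 : e (Sum.inl ⟨0, h0⟩) = i := Fin.ext (by rw [hval1, hi])
      rw [Function.comp_apply, Function.comp_apply, Function.comp_apply,
        Function.comp_apply, e1, e2] at h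
      exact h.symm
  · rintro ⟨hpe, hnev⟩
    refine ⟨⟨?_, ?_⟩, ?_⟩
    · intro i j hij
      refine hpe (e (Sum.inl i)) (e (Sum.inl j)) ?_ ?_
      · rw [hval1, hval1]; exact hij
      · rw [hval1]; omega
    · intro i j hi hj
      have h := hnev (e (Sum.inl j)) (e (Sum.inl i)) (by rw [hval1, hj]) (by rw [hval1, hi])
      exact fun heq => h heq.symm
    · intro k k' hkk'
      refine hpe (e (Sum.inr k)) (e (Sum.inr k')) ?_ ?_
      · rw [hval2, hval2]; omega
      · rw [hval2]; omega

/-! ## Splitting and the reversal bijection -/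

noncomputable def Sser (n j : ℕ) : MvPowerSeries ℕ ℚ :=
  cser (fun κ : Fin n → ℕ => pp n κ ∧ eqv n 0 j κ)

lemma cser_split_at (n : ℕ) (B : (Fin n → ℕ) → Prop) (u w : ℕ) (hu : u < n) (hw : w < n) :
    cser B = cser (fun κ => B κ ∧ nev n u w κ) + cser (fun κ => B κ ∧ eqv n u w κ) := by
  apply cser_split
  · intro κ
    constructor
    · intro hB
      by_cases h : κ ⟨u, hu⟩ = κ ⟨w, hw⟩
      · refine Or.inr ⟨hB, ?_⟩
        intro i j hi hj
        have hi' : i = ⟨u, hu⟩ := Fin.ext hi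
        have hj' : j = ⟨w, hw⟩ := Fin.ext hj
        rw [hi', hj']; exact h
      · refine Or.inl ⟨hB, ?_⟩
        intro i j hi hj
        have hi' : i = ⟨u, hu⟩ := Fin.ext hi
        have hj' : j = ⟨w, hw⟩ := Fin.ext hj
        rw [hi', hj']; exact h
    · rintro (⟨h, _⟩ | ⟨h, _⟩) <;> exact h
  · rintro κ ⟨⟨_, hne⟩, ⟨_, heq⟩⟩
    exact hne ⟨u, hu⟩ ⟨w, hw⟩ rfl rfl (heq ⟨u, hu⟩ ⟨w, hw⟩ rfl rfl)

lemma pe_nev_iff (n c : ℕ) (hc : 2 ≤ c) (hcn : c < n) (κ : Fin n → ℕ) :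
    (pe n c κ ∧ nev n 0 (c - 1) κ) ∧ nev n (c - 1) c κ ↔ pp n κ ∧ nev n 0 (c - 1) κ := by
  constructor
  · rintro ⟨⟨hpe, h0⟩, hcc⟩
    refine ⟨?_, h0⟩
    intro i j hij
    by_cases hjc : (j : ℕ) = c
    · exact hcc i j (by omega) hjc
    · exact hpe i j hij hjc
  · rintro ⟨hpp, h0⟩
    exact ⟨⟨fun i j hij _ => hpp i j hij, h0⟩, fun i j hi hj => hpp i j (by omega)⟩

def revf (n c : ℕ) (hcn : c < n) : Fin n → Fin n :=
  fun i => if h : (i : ℕ) < c then ⟨c - 1 - (i : ℕ), by omega⟩ else i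

lemma revf_lt (n c : ℕ) (hcn : c < n) (i : Fin n) (h : (i : ℕ) < c) :
    revf n c hcn i = ⟨c - 1 - (i : ℕ), by omega⟩ := dif_pos h

lemma revf_ge (n c : ℕ) (hcn : c < n) (i : Fin n) (h : ¬ (i : ℕ) < c) :
    revf n c hcn i = i := dif_neg h

lemma revf_involutive (n c : ℕ) (hcn : c < n) : Function.Involutive (revf n c hcn) := by
  intro i
  by_cases h : (i : ℕ) < c
  · rw [revf_lt n c hcn i h]
    have h2 : ((⟨c - 1 - (i : ℕ), by omega⟩ : Fin n) : ℕ) < c := by simp; omega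
    rw [revf_lt n c hcn _ h2]
    exact Fin.ext (by simp; omega)
  · rw [revf_ge n c hcn i h, revf_ge n c hcn i h]

noncomputable def revp (n c : ℕ) (hcn : c < n) : Equiv.Perm (Fin n) :=
  (revf_involutive n c hcn).toPerm _

lemma revp_apply (n c : ℕ) (hcn : c < n) (i : Fin n) :
    revp n c hcn i = revf n c hcn i := rfl

lemma Y_eq_S (n c : ℕ) (hc : 2 ≤ c) (hcn : c < n) :
    cser (fun κ : Fin n → ℕ => (pe n c κ ∧ nev n 0 (c - 1) κ) ∧ eqv n (c - 1) c κ)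
      = Sser n c := by
  rw [Sser, cser_reindex (revp n c hcn) (fun κ : Fin n → ℕ => pp n κ ∧ eqv n 0 c κ)]
  apply cser_congr
  intro κ
  have hc1n : c - 1 < n := by omega
  set σ := revp n c hcn
  have hltv : ∀ x : Fin n, (x : ℕ) < c → ((σ x : Fin n) : ℕ) = c - 1 - (x : ℕ) := by
    intro x hx
    rw [show σ x = revf n c hcn x from rfl, revf_lt n c hcn x hx]
  have hgev : ∀ x : Fin n, ¬ (x : ℕ) < c → σ x = x := fun x hx => revf_ge n c hcn x hx
  have hinvol : ∀ x : Fin n, σ (σ x) = x := fun x => revf_involutive n c hcn x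
  have hcomp : ∀ x : Fin n, (κ ∘ ⇑σ) (σ x) = κ x := fun x => congrArg κ (hinvol x)
  constructor
  · -- Ypred κ → Spred (κ ∘ σ)
    rintro ⟨⟨hpe, h0⟩, hcc⟩
    constructor
    · -- pp (κ ∘ σ)
      intro i j hij
      show κ (σ i) ≠ κ (σ j)
      by_cases hjlt : (j : ℕ) < c
      · have hilt : (i : ℕ) < c := by omega
        have h := hpe (σ j) (σ i) (by rw [hltv j hjlt, hltv i hilt]; omega)
          (by rw [hltv i hilt]; omega)
        exact fun he => h he.symm
      · by_cases hilt : (i : ℕ) < c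
        · -- i has value c-1, j has value c
          rw [hgev j hjlt]
          have hA := h0 (σ i) (⟨c - 1, hc1n⟩ : Fin n) (by rw [hltv i hilt]; omega) rfl
          have hB := hcc (⟨c - 1, hc1n⟩ : Fin n) j rfl (by omega)
          exact fun he => hA (he.trans hB.symm)
        · rw [hgev i hilt, hgev j hjlt]
          exact hpe i j hij (by omega)
    · -- eqv 0 c of κ ∘ σ
      intro i j hi hj
      show κ (σ i) = κ (σ j)
      rw [hgev j (by omega)]
      exact hcc (σ i) j (by rw [hltv i (by omega)]; omega) hj
  · -- Spred (κ ∘ σ) → Ypred κ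
    rintro ⟨hpp, heq⟩
    refine ⟨⟨?_, ?_⟩, ?_⟩
    · -- pe
      intro i j hij hjc
      by_cases hjlt : (j : ℕ) < c
      · have hilt : (i : ℕ) < c := by omega
        have h := hpp (σ j) (σ i) (by rw [hltv j hjlt, hltv i hilt]; omega)
        rw [hcomp j, hcomp i] at h
        exact fun he => h he.symm
      · have hige : ¬ (i : ℕ) < c := by omega
        have h := hpp (σ i) (σ j) (by rw [hgev i hige, hgev j hjlt]; exact hij)
        rw [hcomp i, hcomp j] at h
        exact h
    · -- nev 0 (c-1)
      intro i j hi hj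
      have h := hpp (σ i) (⟨c, hcn⟩ : Fin n) (by rw [hltv i (by omega)]; simp; omega)
      rw [hcomp i, Function.comp_apply, hgev (⟨c, hcn⟩ : Fin n) (by simp)] at h
      have h2 := heq (σ j) (⟨c, hcn⟩ : Fin n) (by rw [hltv j (by omega)]; omega) rfl
      rw [hcomp j, Function.comp_apply, hgev (⟨c, hcn⟩ : Fin n) (by simp)] at h2
      exact fun he => h (he.trans h2)
    · -- eqv (c-1) c
      intro i j hi hj
      have h2 := heq (σ i) j (by rw [hltv i (by omega)]; omega) hj
      rw [hcomp i, Function.comp_apply, hgev j (by omega)] at h2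
      exact h2

/-! ## Assembly -/

lemma csf_path_eq (n : ℕ) : csf (path n) = cser (pp n) := by
  rw [csf_eq_cser]; exact cser_congr (fun κ => path_proper_iff n κ)

lemma csf_tadpole_eq (a b : ℕ) (ha : 3 ≤ a) :
    csf (tadpole a b) =
      cser (fun κ : Fin (a + b) → ℕ => pp (a + b) κ ∧ nev (a + b) 0 (a - 1) κ) := by
  rw [csf_eq_cser]; exact cser_congr (fun κ => tadpole_proper_iff a b ha κ)

lemma Sser_one (n : ℕ) (hn : 2 ≤ n) : Sser n 1 = 0 := by
  apply cser_zero
  rintro κ ⟨hp, heq⟩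
  have h0 : 0 < n := by omega
  have h1 : 1 < n := by omega
  exact hp ⟨0, h0⟩ ⟨1, h1⟩ rfl (heq ⟨0, h0⟩ ⟨1, h1⟩ rfl rfl)

lemma key_step (n c : ℕ) (hc : 2 ≤ c) (hcn : c < n) :
    csf (cycle c) * csf (path (n - c)) + Sser n (c - 1) = csf (path n) + Sser n c := by
  have hc1n : c - 1 < n := by omega
  have A1 := csf_cycle_mul_path n c hc (le_of_lt hcn)
  have A2 := cser_split_at n (fun κ => pe n c κ ∧ nev n 0 (c - 1) κ) (c - 1) c hc1n hcn
  have A3 : cser (fun κ : Fin n → ℕ => (pe n c κ ∧ nev n 0 (c - 1) κ) ∧ nev n (c - 1) c κ)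
      = cser (fun κ : Fin n → ℕ => pp n κ ∧ nev n 0 (c - 1) κ) :=
    cser_congr (fun κ => pe_nev_iff n c hc hcn κ)
  have A4 := Y_eq_S n c hc hcn
  have A5 := cser_split_at n (pp n) 0 (c - 1) (by omega) hc1n
  have A6 : csf (path n) = cser (pp n) := csf_path_eq n
  have A7 : Sser n (c - 1) = cser (fun κ : Fin n → ℕ => pp n κ ∧ eqv n 0 (c - 1) κ) := rfl
  linear_combination A1 + A2 + A3 + A4 + A7 - A5 - A6

/-- For all `a ≥ 3` and `b ≥ 1`,
`X_{T^{a,b}} = (a−1) X_{P_{a+b}} − ∑_{i=2}^{a−1} X_{C_i} · X_{P_{a+b−i}}`,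
where `C_2 = K_2` (so that `X_{C_2} = 2 e_2`). -/
theorem csf_tadpole_closed_form (a b : ℕ) (ha : 3 ≤ a) (hb : 1 ≤ b) :
    csf (tadpole a b) =
      ((a - 1 : ℕ) : MvPowerSeries ℕ ℚ) * csf (path (a + b))
        - ∑ i ∈ Finset.Icc 2 (a - 1), csf (cycle i) * csf (path (a + b - i)) := by

  have B1 : csf (path (a + b)) = cser (pp (a + b)) := csf_path_eq (a + b)
  have B2 := cser_split_at (a + b) (pp (a + b)) 0 (a - 1) (by omega) (by omega)
  have B3 := csf_tadpole_eq a b ha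
  have A7 : Sser (a + b) (a - 1)
      = cser (fun κ : Fin (a + b) → ℕ => pp (a + b) κ ∧ eqv (a + b) 0 (a - 1) κ) := rfl
  have hsum : ∑ i ∈ Finset.Icc 2 (a - 1), csf (cycle i) * csf (path (a + b - i))
      = (a - 2) • csf (path (a + b)) + (Sser (a + b) (a - 1) - Sser (a + b) 1) := by
    have hstep : ∀ i ∈ Finset.Icc 2 (a - 1), csf (cycle i) * csf (path (a + b - i))
        = csf (path (a + b)) + (Sser (a + b) i - Sser (a + b) (i - 1)) := by
      intro i hi
      rw [Finset.mem_Icc] at hi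
      have h := key_step (a + b) i hi.1 (by omega)
      linear_combination h
    rw [Finset.sum_congr rfl hstep, Finset.sum_add_distrib, Finset.sum_const, Nat.card_Icc]
    have hc' : a - 1 + 1 - 2 = a - 2 := by omega
    rw [hc']
    congr 1
    have hIcc : Finset.Icc 2 (a - 1) = Finset.Ico 2 a := by
      rw [← Finset.Ico_add_one_right_eq_Icc]
      congr 1
      omega
    rw [hIcc, Finset.sum_Ico_eq_sum_range]
    calc ∑ i ∈ Finset.range (a - 2), (Sser (a + b) (2 + i) - Sser (a + b) (2 + i - 1))
        = ∑ i ∈ Finset.range (a - 2),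
            ((fun k => Sser (a + b) (k + 1)) (i + 1) - (fun k => Sser (a + b) (k + 1)) i) := by
          refine Finset.sum_congr rfl (fun i _ => ?_)
          have e1 : 2 + i = i + 1 + 1 := by omega
          have e2 : 2 + i - 1 = i + 1 := by omega
          rw [e2, e1]
      _ = (fun k => Sser (a + b) (k + 1)) (a - 2) - (fun k => Sser (a + b) (k + 1)) 0 :=
          Finset.sum_range_sub (fun k => Sser (a + b) (k + 1)) (a - 2)
      _ = Sser (a + b) (a - 1) - Sser (a + b) 1 := by
          have e3 : a - 2 + 1 = a - 1 := by omega
          simp only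
          rw [e3]
  have hs1 : Sser (a + b) 1 = 0 := Sser_one (a + b) (by omega)
  have hsmul : (a - 2) • csf (path (a + b))
      = ((a - 2 : ℕ) : MvPowerSeries ℕ ℚ) * csf (path (a + b)) := nsmul_eq_mul _ _
  have hcast : ((a - 1 : ℕ) : MvPowerSeries ℕ ℚ) = ((a - 2 : ℕ) : MvPowerSeries ℕ ℚ) + 1 := by
    rw [show a - 1 = (a - 2) + 1 from by omega, Nat.cast_add, Nat.cast_one]
  have hT : csf (tadpole a b) = csf (path (a + b)) - Sser (a + b) (a - 1) := by
    linear_combination B3 - B1 - B2 + A7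
  rw [hsum, hs1, hsmul, hcast, hT]
  ring
end
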